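/- arXiv:2207.06009 — 13 statements merged into one kernel-verified Lean document; each statement's English description precedes it below -/
import Mathlib

section
/- Let G=(V,E) be a connected undirected graph on V={1,…,n}, and for each i let A_i ∈ ℝ^{m×d_i} be a matrix of full row rank m. Then S_1 + S_2 + ⋯ + S_n = Null(A), i.e., the subspaces S_i together span the whole null space of the coupling map A. -/
/-- Lemma `reachable`, first part.
Let `G` be a connected undirected graph on `{1,…,n}` and, for each node `i`,
let `A i : ℝ^{m × d i}` have full row rank `m`.  Let `Amap` be the coupling
map `u ↦ ∑ j, A j *ᵥ u j`, and for each node `i` let `S i` be the subspace of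
vectors `u` that vanish outside the closed neighborhood of `i` and satisfy
`Amap u = 0`.  Then `S 1 + ⋯ + S n = Null(A)`. -/
theorem stmt_0 (n m : ℕ) (d : Fin n → ℕ)
    (G : SimpleGraph (Fin n)) (hconn : G.Connected)
    (A : (i : Fin n) → Matrix (Fin m) (Fin (d i)) ℝ)
    (hrank : ∀ i, (A i).rank = m)
    (Amap : ((j : Fin n) → (Fin (d j) → ℝ)) →ₗ[ℝ] (Fin m → ℝ))
    (hAmap : ∀ u, Amap u = ∑ j, (A j).mulVec (u j))
    (S : Fin n → Submodule ℝ ((j : Fin n) → (Fin (d j) → ℝ)))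
    (hS : ∀ i, (S i : Set ((j : Fin n) → (Fin (d j) → ℝ))) =
      {u | (∀ j, j ≠ i → ¬ G.Adj i j → u j = 0) ∧ Amap u = 0}) :
    (⨆ i, S i) = LinearMap.ker Amap := by
  classical
  have hAmap_single : ∀ (i : Fin n) (x : Fin (d i) → ℝ),
      Amap (Pi.single i x) = (A i).mulVec x := by
    intro i x
    rw [hAmap]
    rw [Finset.sum_eq_single i]
    · rw [Pi.single_eq_same]
    · intro j _ hj
      rw [Pi.single_eq_of_ne hj, Matrix.mulVec_zero]
    · intro h; exact absurd (Finset.mem_univ i) h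
  have hsurj : ∀ (i : Fin n) (b : Fin m → ℝ), ∃ x, (A i).mulVec x = b := by
    intro i b
    have htop : LinearMap.range (A i).mulVecLin = ⊤ := by
      apply Submodule.eq_top_of_finrank_eq
      rw [← Matrix.rank, hrank i, Module.finrank_fintype_fun_eq_card, Fintype.card_fin]
    have hb : b ∈ LinearMap.range (A i).mulVecLin := htop ▸ Submodule.mem_top
    obtain ⟨x, hx⟩ := hb
    exact ⟨x, hx⟩
  apply le_antisymm
  · refine iSup_le fun i u hu => ?_
    rw [← SetLike.mem_coe, hS i] at hu
    exact LinearMap.mem_ker.mpr hu.2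
  · intro u hu
    have hu0 : Amap u = 0 := hu
    obtain ⟨r⟩ : Nonempty (Fin n) := hconn.nonempty
    have key : ∀ (i r' : Fin n) (w : G.Walk i r') (x : Fin (d i) → ℝ),
        ∃ y, (A r').mulVec y = (A i).mulVec x ∧
          Pi.single i x - Pi.single r' y ∈ ⨆ i, S i := by
      intro i r' w
      induction w with
      | nil => exact fun x => ⟨x, rfl, by simp⟩
      | @cons a b c h p ih =>
        intro x
        obtain ⟨z, hz⟩ := hsurj b ((A a).mulVec x)
        obtain ⟨y, hy1, hy2⟩ := ih z
        refine ⟨y, by rw [hy1, hz], ?_⟩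
        have h1 : Pi.single a x - Pi.single b z ∈ S a := by
          rw [← SetLike.mem_coe, hS a]
          refine ⟨fun k hk1 hk2 => ?_, ?_⟩
          · have hkb : k ≠ b := fun hkb => hk2 (hkb ▸ h)
            rw [Pi.sub_apply, Pi.single_eq_of_ne hk1, Pi.single_eq_of_ne hkb, sub_zero]
          · rw [map_sub, hAmap_single, hAmap_single, hz, sub_self]
        have hmem := add_mem (le_iSup S a h1) hy2
        rwa [sub_add_sub_cancel] at hmem
    have key2 : ∀ (i : Fin n) (x : Fin (d i) → ℝ),
        ∃ y, (A r).mulVec y = (A i).mulVec x ∧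
          Pi.single i x - Pi.single r y ∈ ⨆ i, S i := by
      intro i x
      obtain ⟨w⟩ := hconn i r
      exact key i r w x
    choose y hy1 hy2 using fun i => key2 i (u i)
    have hsingle_sum : Pi.single (M := fun j => Fin (d j) → ℝ) r (∑ i, y i)
        = ∑ i, Pi.single r (y i) := by
      ext k t
      rw [Finset.sum_apply]
      by_cases hk : k = r
      · subst hk; simp
      · simp [Pi.single_eq_of_ne hk]
    have hdiff : u - Pi.single r (∑ i, y i) ∈ ⨆ i, S i := by
      have heq : u - Pi.single r (∑ i, y i)
          = ∑ i, (Pi.single i (u i) - Pi.single r (y i)) := by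
        rw [Finset.sum_sub_distrib, Finset.univ_sum_single, hsingle_sum]
      rw [heq]
      exact Submodule.sum_mem _ fun i _ => hy2 i
    have hlast : Pi.single r (∑ i, y i) ∈ S r := by
      rw [← SetLike.mem_coe, hS r]
      refine ⟨fun k hk1 _ => Pi.single_eq_of_ne hk1 _, ?_⟩
      rw [hAmap_single, ← Matrix.mulVecLin_apply, map_sum]
      simp only [Matrix.mulVecLin_apply]
      rw [Finset.sum_congr rfl fun i _ => hy1 i, ← hAmap u, hu0]
    have hu_eq : u = (u - Pi.single r (∑ i, y i)) + Pi.single r (∑ i, y i) := by abel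
    rw [hu_eq]
    exact add_mem hdiff (le_iSup S r hlast)
end

section
/- Let 𝓛 be a finite set of links and, for each ℓ∈𝓛, let T_ℓ ⊆ V = {1,…,n} be a nonempty set of transmitters. Each node j holds the variable block y_j = (y_{jℓ})_{ℓ : j∈T_ℓ}, and the coupling map A sends y to (∑_{i∈T_ℓ} y_{iℓ})_{ℓ∈𝓛} ∈ ℝ^{|𝓛|}. Define the graph G on V by joining distinct nodes i and j whenever i,j ∈ T_ℓ for some ℓ∈𝓛. Then S_1 + S_2 + ⋯ + S_n = Null(A). -/
/-- Lemma `reachable`, second part: rate control.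
`𝓛` is a finite set of links, `T ℓ ⊆ {1,…,n}` the nonempty set of transmitters
using link `ℓ`.  Node `j` holds the block `y j = (y_{jℓ})_{ℓ : j ∈ T ℓ}` and the
coupling map sends `y` to `(∑ i ∈ T ℓ, y i ℓ)_{ℓ}`.  The graph `G` joins two
distinct nodes whenever they share a link.  With `S i` the subspace of vectors
vanishing outside the closed neighborhood of `i` and lying in `Null(A)`,
one has `S 1 + ⋯ + S n = Null(A)`. -/
theorem stmt_1 (n : ℕ) (L : Type*) [Fintype L] [DecidableEq L]
    (T : L → Finset (Fin n)) (hT : ∀ ℓ, (T ℓ).Nonempty)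
    (G : SimpleGraph (Fin n))
    (hG : ∀ i j, G.Adj i j ↔ (i ≠ j ∧ ∃ ℓ, i ∈ T ℓ ∧ j ∈ T ℓ))
    (Amap : ((j : Fin n) → ({ℓ : L // j ∈ T ℓ} → ℝ)) →ₗ[ℝ] (L → ℝ))
    (hAmap : ∀ y ℓ, Amap y ℓ = ∑ i ∈ (T ℓ).attach, y i.1 ⟨ℓ, i.2⟩)
    (S : Fin n → Submodule ℝ ((j : Fin n) → ({ℓ : L // j ∈ T ℓ} → ℝ)))
    (hS : ∀ i, (S i : Set ((j : Fin n) → ({ℓ : L // j ∈ T ℓ} → ℝ))) =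
      {u | (∀ j, j ≠ i → ¬ G.Adj i j → u j = 0) ∧ Amap u = 0}) :
    (⨆ i, S i) = LinearMap.ker Amap := by
  apply le_antisymm
  · refine iSup_le fun i u hu => ?_
    have h : u ∈ {u | (∀ j, j ≠ i → ¬ G.Adj i j → u j = 0) ∧ Amap u = 0} := by
      rw [← hS i]; exact hu
    exact LinearMap.mem_ker.mpr h.2
  · intro u hu
    have hA : Amap u = 0 := hu
    set v : L → ((j : Fin n) → ({ℓ : L // j ∈ T ℓ} → ℝ)) :=
      fun ℓ j ℓ' => if ℓ'.1 = ℓ then u j ℓ' else 0 with hv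
    have huv : u = ∑ ℓ, v ℓ := by
      funext j ℓ'
      simp only [Finset.sum_apply, hv]
      rw [Finset.sum_ite_eq Finset.univ ℓ'.1 (fun _ => u j ℓ')]
      simp
    rw [huv]
    refine Submodule.sum_mem _ fun ℓ _ => ?_
    obtain ⟨i₀, hi₀⟩ := hT ℓ
    refine Submodule.mem_iSup_of_mem i₀ ?_
    have hmem : v ℓ ∈ {u | (∀ j, j ≠ i₀ → ¬ G.Adj i₀ j → u j = 0) ∧ Amap u = 0} := by
      constructor
      · intro j hj hadj
        funext ℓ'
        by_cases h : ℓ'.1 = ℓ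
        · exact absurd ((hG i₀ j).mpr ⟨Ne.symm hj, ℓ, hi₀, h ▸ ℓ'.2⟩) hadj
        · simp [hv, h]
      · funext ℓ''
        rw [hAmap]
        by_cases h : ℓ'' = ℓ
        · subst h
          have h2 := hAmap u ℓ''
          simp only [hv, if_true]
          rw [← h2, hA, Pi.zero_apply]
        · simp [hv, h]
    rw [← SetLike.mem_coe, hS i₀]
    exact hmem
end

section
/- Let G=(V,E) be a connected undirected graph on V={1,…,n} with n ≥ 2, let m ≥ 1, and let A = 𝓛_G ⊗ I_m, where 𝓛_G is the graph Laplacian of G, so that each node i's block matrix A_i is the i-th block column of 𝓛_G ⊗ I_m (each d_i = m). Then S_1 + ⋯ + S_n = Null(A) holds if and only if G contains a star centered at some node, i.e., there exists i ∈ V with N̄_i = V. Moreover, S_i = {0} whenever N̄_i ≠ V, and S_i = Null(A) whenever N̄_i = V. -/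
/-- consensus constraint example.
For a connected graph `G` on `{1,…,n}` (`n ≥ 2`, `m ≥ 1`) and the coupling map
`A = 𝓛_G ⊗ I_m` (node `i`'s block being the `i`-th block column of the
Laplacian tensored with `I_m`), the reachability identity
`S 1 + ⋯ + S n = Null(A)` holds iff `G` contains a star centered at some node
(`N̄ i = V` for some `i`).  Moreover `S i = {0}` when `N̄ i ≠ V` and
`S i = Null(A)` when `N̄ i = V`. -/
theorem stmt_2 (n m : ℕ) (hn : 2 ≤ n) (hm : 1 ≤ m)
    (G : SimpleGraph (Fin n)) [DecidableRel G.Adj] (hconn : G.Connected)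
    (Amap : (Fin n → Fin m → ℝ) →ₗ[ℝ] (Fin n → Fin m → ℝ))
    (hAmap : ∀ u j, Amap u j = ∑ i, G.lapMatrix ℝ j i • u i)
    (S : Fin n → Submodule ℝ (Fin n → Fin m → ℝ))
    (hS : ∀ i, (S i : Set (Fin n → Fin m → ℝ)) =
      {u | (∀ j, j ≠ i → ¬ G.Adj i j → u j = 0) ∧ Amap u = 0}) :
    ((⨆ i, S i) = LinearMap.ker Amap ↔ ∃ i, ∀ j, j = i ∨ G.Adj i j) ∧
    (∀ i, ¬ (∀ j, j = i ∨ G.Adj i j) → S i = ⊥) ∧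
    (∀ i, (∀ j, j = i ∨ G.Adj i j) → S i = LinearMap.ker Amap) := by
  haveI : NeZero n := ⟨by omega⟩
  -- characterization of the kernel: constant vectors
  have hker : ∀ u : Fin n → Fin m → ℝ, Amap u = 0 ↔ ∀ i j, u i = u j := by
    intro u
    constructor
    · intro h i j
      funext k
      have hv : Matrix.toLin' (G.lapMatrix ℝ) (fun i => u i k) = 0 := by
        funext p
        have := congrFun (congrFun h p) k
        rw [hAmap] at this
        simpa [Matrix.toLin'_apply, Matrix.mulVec, dotProduct] using this
      exact (G.lapMatrix_mulVec_eq_zero_iff_forall_reachable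
        (x := fun i => u i k)).mp hv i j (hconn.preconnected i j)
    · intro h
      funext p
      have hrow : ∑ i, G.lapMatrix ℝ p i = 0 := by
        have := congrFun (G.lapMatrix_mulVec_const_eq_zero (R := ℝ)) p
        simpa [Matrix.mulVec, dotProduct] using this
      rw [hAmap]
      have : ∀ i, u i = u p := fun i => h i p
      calc ∑ i, G.lapMatrix ℝ p i • u i = ∑ i, G.lapMatrix ℝ p i • u p := by
            simp_rw [this]
        _ = (∑ i, G.lapMatrix ℝ p i) • u p := by rw [Finset.sum_smul]
        _ = 0 := by rw [hrow, zero_smul]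
  have hmemS : ∀ i u, u ∈ S i ↔ ((∀ j, j ≠ i → ¬ G.Adj i j → u j = 0) ∧ Amap u = 0) := by
    intro i u
    rw [← SetLike.mem_coe, hS i, Set.mem_setOf_eq]
  have part2 : ∀ i, ¬ (∀ j, j = i ∨ G.Adj i j) → S i = ⊥ := by
    intro i hi
    push_neg at hi
    obtain ⟨j, hj1, hj2⟩ := hi
    ext u
    simp only [Submodule.mem_bot]
    rw [hmemS]
    constructor
    · rintro ⟨hsupp, hA⟩
      have hj0 : u j = 0 := hsupp j hj1 hj2
      funext p
      rw [(hker u).mp hA p j, hj0]; rfl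
    · rintro rfl; exact ⟨fun _ _ _ => rfl, map_zero _⟩
  have part3 : ∀ i, (∀ j, j = i ∨ G.Adj i j) → S i = LinearMap.ker Amap := by
    intro i hi
    ext u
    rw [hmemS, LinearMap.mem_ker]
    constructor
    · exact fun h => h.2
    · intro h
      refine ⟨fun j hj1 hj2 => ?_, h⟩
      rcases hi j with h' | h'
      · exact absurd h' hj1
      · exact absurd h' hj2
  refine ⟨⟨?_, ?_⟩, part2, part3⟩
  · intro hsup
    by_contra hstar
    push_neg at hstar
    have hbot : (⨆ i, S i) = ⊥ := by
      simp only [Submodule.iSup_eq_span]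
      have : ∀ i, S i = ⊥ := fun i => part2 i (by
        intro h; exact absurd h (by push_neg; exact hstar i))
      simp [this]
    rw [hbot] at hsup
    have hone : (fun (_ : Fin n) (_ : Fin m) => (1:ℝ)) ∈ LinearMap.ker Amap := by
      rw [LinearMap.mem_ker, hker]; intro _ _; rfl
    rw [← hsup, Submodule.mem_bot] at hone
    haveI : NeZero m := ⟨by omega⟩
    have := congrFun (congrFun hone 0) 0
    simp at this
  · rintro ⟨i, hi⟩
    apply le_antisymm
    · apply iSup_le
      intro j
      intro u hu
      exact ((hmemS j u).mp hu).2
    · rw [← part3 i hi]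
      exact le_iSup S i
end

section
/- Consider f_i(x) = (1/2)(x − θ_i)² on ℝ for i=1,…,4 with (θ_1,θ_2,θ_3,θ_4) = (1,0,0,1), coupling coefficients A_1 = A_4 = 1, A_2 = A_3 = 0, coupling constraint x_1 + x_4 = 1, and the line graph with edges {1,2},{2,3},{3,4}. Then: (i) at the point x' = (0,0,0,1), for every edge {i,j} of the line graph, the unique minimizer of (p_{ji}, p_{ij}) ↦ f_i(x_i' + p_{ji}) + f_j(x_j' + p_{ij}) subject to A_i p_{ji} + A_j p_{ij} = 0 is (p_{ji}, p_{ij}) = (0,0), so x' is a fixed point of the edge-based weighted-gradient update; (ii) the unique minimizer of ∑_{i=1}^4 f_i(x_i) over { x ∈ ℝ⁴ : x_1 + x_4 = 1 } is (1/2, 0, 0, 1/2) ≠ x'. -/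
/-- Example 1: failure of the extension to general `Aᵢ`'s.
With `f i t = ½(t − θ i)²`, `θ = (1,0,0,1)`, coupling coefficients
`a = (1,0,0,1)`, coupling constraint `x 0 + x 3 = 1` and the line graph
`0–1–2–3`:
(i) at `x' = (0,0,0,1)`, for every edge `{i,j}` the unique minimizer of
`(p,q) ↦ f i (x' i + p) + f j (x' j + q)` subject to `a i * p + a j * q = 0`
is `(0,0)` (so `x'` is a fixed point of the edge-based update);
(ii) the unique minimizer of `∑ i, f i (x i)` over `{x : x 0 + x 3 = 1}` is
`(1/2, 0, 0, 1/2) ≠ x'`. -/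
theorem stmt_4 (θ : Fin 4 → ℝ) (hθ : θ = ![1, 0, 0, 1])
    (f : Fin 4 → ℝ → ℝ) (hf : ∀ i t, f i t = (1/2) * (t - θ i)^2)
    (a : Fin 4 → ℝ) (ha : a = ![1, 0, 0, 1])
    (x' : Fin 4 → ℝ) (hx' : x' = ![0, 0, 0, 1])
    (xs : Fin 4 → ℝ) (hxs : xs = ![1/2, 0, 0, 1/2]) :
    (∀ i j : Fin 4, ((i, j) = (0, 1) ∨ (i, j) = (1, 2) ∨ (i, j) = (2, 3)) →
      (a i * (0:ℝ) + a j * (0:ℝ) = 0) ∧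
      ∀ p q : ℝ, a i * p + a j * q = 0 → (p, q) ≠ (0, 0) →
        f i (x' i + 0) + f j (x' j + 0) < f i (x' i + p) + f j (x' j + q)) ∧
    (xs 0 + xs 3 = 1) ∧
    (∀ x : Fin 4 → ℝ, x 0 + x 3 = 1 → x ≠ xs →
      ∑ i, f i (xs i) < ∑ i, f i (x i)) ∧
    xs ≠ x' := by
  subst hθ ha hx' hxs
  refine ⟨?_, by norm_num [Matrix.cons_val_three, Matrix.tail_cons, Matrix.head_cons], ?_, ?_⟩
  · rintro i j (h | h | h) <;>
    · obtain ⟨hi, hj⟩ := Prod.mk.injEq .. ▸ h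
      subst hi hj
      simp only [hf]
      constructor
      · norm_num
      · intro p q hc hne
        have hne' : p ≠ 0 ∨ q ≠ 0 := by
          by_contra hcon; push_neg at hcon; exact hne (by simp [hcon.1, hcon.2])
        simp only [Matrix.cons_val_zero, Matrix.cons_val_one, Matrix.head_cons,
          Matrix.cons_val_two, Matrix.tail_cons, Matrix.cons_val_three] at hc ⊢
        rcases hne' with hp | hq
        · have h' : 0 < p^2 := by positivity
          nlinarith [sq_nonneg q, sq_nonneg p]
        · have h' : 0 < q^2 := by positivity
          nlinarith [sq_nonneg q, sq_nonneg p]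
  · intro x hx hne
    simp only [hf, Fin.sum_univ_four]
    simp only [Matrix.cons_val_zero, Matrix.cons_val_one, Matrix.head_cons,
      Matrix.cons_val_two, Matrix.tail_cons, Matrix.cons_val_three]
    have h : ¬ (x 0 = 1/2 ∧ x 1 = 0 ∧ x 2 = 0 ∧ x 3 = 1/2) := by
      intro ⟨h0, h1, h2, h3⟩
      apply hne
      funext i
      fin_cases i <;> simp [h0, h1, h2, h3]
    by_contra hle
    push_neg at hle
    apply h
    have e0 : x 0 = 1/2 := by nlinarith [sq_nonneg (x 1), sq_nonneg (x 2), sq_nonneg (x 0 - x 3)]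
    have e1 : x 1 = 0 := by nlinarith [sq_nonneg (x 2), sq_nonneg (x 0 - x 3)]
    have e2 : x 2 = 0 := by nlinarith [sq_nonneg (x 1), sq_nonneg (x 0 - x 3)]
    exact ⟨e0, e1, e2, by linarith⟩
  · intro h
    have := congrFun h 0
    norm_num at this
end

section
/- Consider f_i(x) = (1/2)(x − θ_i)² on ℝ for i=1,…,4 with (θ_1,θ_2,θ_3,θ_4) = (1,0,0,1), coupling coefficients A_i = 1 for all i, coupling constraint x_1 + x_2 + x_3 + x_4 = 1, local constraints x_i ∈ [0,1], and the line graph with edges {1,2},{2,3},{3,4}. Then: (i) at the point x' = (0,0,0,1), for every edge {i,j} of the line graph, the unique minimizer of (p_{ji}, p_{ij}) ↦ f_i(x_i' + p_{ji}) + f_j(x_j' + p_{ij}) subject to p_{ji} + p_{ij} = 0, x_i' + p_{ji} ∈ [0,1], and x_j' + p_{ij} ∈ [0,1] is (p_{ji}, p_{ij}) = (0,0), so x' is a fixed point of the locally-constrained edge-based update; (ii) the unique minimizer of ∑_{i=1}^4 f_i(x_i) over { x ∈ [0,1]⁴ : x_1 + x_2 + x_3 + x_4 = 1 } is (1/2,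 0, 0, 1/2) ≠ x'. -/
/-- Example 2: failure with local constraints.
With `f i t = ½(t − θ i)²`, `θ = (1,0,0,1)`, coupling coefficients all `1`,
coupling constraint `∑ i, x i = 1`, local constraints `x i ∈ [0,1]`, and the
line graph `0–1–2–3`:
(i) at `x' = (0,0,0,1)`, for every edge `{i,j}` the unique minimizer of
`(p,q) ↦ f i (x' i + p) + f j (x' j + q)` subject to `p + q = 0`,
`x' i + p ∈ [0,1]`, `x' j + q ∈ [0,1]` is `(0,0)`;
(ii) the unique minimizer of `∑ i, f i (x i)` over
`{x ∈ [0,1]⁴ : ∑ i, x i = 1}` is `(1/2, 0, 0, 1/2) ≠ x'`. -/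
theorem stmt_5 (θ : Fin 4 → ℝ) (hθ : θ = ![1, 0, 0, 1])
    (f : Fin 4 → ℝ → ℝ) (hf : ∀ i t, f i t = (1/2) * (t - θ i)^2)
    (x' : Fin 4 → ℝ) (hx' : x' = ![0, 0, 0, 1])
    (xs : Fin 4 → ℝ) (hxs : xs = ![1/2, 0, 0, 1/2]) :
    (∀ i j : Fin 4, ((i, j) = (0, 1) ∨ (i, j) = (1, 2) ∨ (i, j) = (2, 3)) →
      ((0:ℝ) + (0:ℝ) = 0 ∧ x' i + 0 ∈ Set.Icc (0:ℝ) 1 ∧ x' j + 0 ∈ Set.Icc (0:ℝ) 1) ∧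
      ∀ p q : ℝ, p + q = 0 → x' i + p ∈ Set.Icc (0:ℝ) 1 → x' j + q ∈ Set.Icc (0:ℝ) 1 →
        (p, q) ≠ (0, 0) →
        f i (x' i + 0) + f j (x' j + 0) < f i (x' i + p) + f j (x' j + q)) ∧
    ((∑ i, xs i) = 1 ∧ ∀ i, xs i ∈ Set.Icc (0:ℝ) 1) ∧
    (∀ x : Fin 4 → ℝ, (∑ i, x i) = 1 → (∀ i, x i ∈ Set.Icc (0:ℝ) 1) → x ≠ xs →
      ∑ i, f i (xs i) < ∑ i, f i (x i)) ∧
    xs ≠ x' := by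
  subst hθ hx' hxs
  refine ⟨?_, ⟨?_, ?_⟩, ?_, ?_⟩
  · rintro i j (h | h | h) <;>
    · obtain ⟨hi, hj⟩ := Prod.mk.injEq .. ▸ h
      subst hi hj
      refine ⟨⟨by ring, by norm_num [Matrix.cons_val_two, Matrix.cons_val_three], by norm_num [Matrix.cons_val_two, Matrix.cons_val_three]⟩, ?_⟩
      intro p q hpq ⟨hp0, hp1⟩ ⟨hq0, hq1⟩ hne
      simp only [hf]
      norm_num [Matrix.cons_val_two, Matrix.cons_val_three] at hp0 hp1 hq0 hq1 ⊢
      have hp : p ≠ 0 := by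
        rintro rfl
        exact hne (by simp [show q = 0 by linarith])
      rcases hp.lt_or_gt with h' | h' <;> nlinarith [sq_nonneg p, sq_nonneg q]
  · simp [Fin.sum_univ_four]; norm_num
  · intro i
    fin_cases i <;> norm_num
  · intro x hsum hbox hne
    have key : x 0 ≠ 1/2 ∨ x 1 ≠ 0 ∨ x 2 ≠ 0 ∨ x 3 ≠ 1/2 := by
      by_contra hc
      push_neg at hc
      obtain ⟨a, b, c, d⟩ := hc
      apply hne
      funext i
      fin_cases i <;> simp [a, b, c, d]
    obtain ⟨h00, h01⟩ := hbox 0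
    obtain ⟨h10, h11⟩ := hbox 1
    obtain ⟨h20, h21⟩ := hbox 2
    obtain ⟨h30, h31⟩ := hbox 3
    rw [Fin.sum_univ_four] at hsum
    simp only [hf, Fin.sum_univ_four]
    norm_num [Matrix.cons_val_two, Matrix.cons_val_three]
    rcases key with h | h | h | h <;>
      nlinarith [mul_self_pos.mpr (sub_ne_zero.mpr h), sq_nonneg (x 0 - 1/2),
        sq_nonneg (x 3 - 1/2), sq_nonneg (x 1), sq_nonneg (x 2)]
  · intro h
    have := congrFun h 0
    norm_num at this
end

section
/- Under the DFM setup, every iterate x^k (k ≥ 0) generated by DFM is feasible for the barrier problem (P_ρ), i.e., ∑_i A_i x_i^k = c and x_i^k ∈ X̃_i for all i, and hence x^k is also feasible for the original problem (P). -/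
open RealInnerProductSpace





open Finset in
private lemma combo_mem' {E : Type*} [AddCommGroup E] [Module ℝ E] {s : Set E}
    (hs : Convex ℝ s) {ι : Type*} [DecidableEq ι] (t : Finset ι) (w : ι → ℝ) (z : ι → E)
    (a : E) (ha : a ∈ s) (hw : ∀ j ∈ t, 0 ≤ w j) (hz : ∀ j ∈ t, z j ∈ s)
    (hS : ∑ j ∈ t, w j ≤ 1) :
    (1 - ∑ j ∈ t, w j) • a + ∑ j ∈ t, w j • z j ∈ s := by
  classical
  set S := ∑ j ∈ t, w j with hSdef
  have hnone : (none : Option ι) ∉ t.image some := by simp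
  have hinj : ∀ x ∈ t, ∀ y ∈ t, some x = some y → x = y := by
    intro x _ y _ h; exact Option.some.inj h
  have hkey := hs.sum_mem (t := insert none (t.image some))
    (w := fun o => o.elim (1 - S) w) (z := fun o => o.elim a z)
    (fun o ho => by
      cases o with
      | none => exact sub_nonneg.2 hS
      | some j =>
        have : j ∈ t := by simpa using ho
        exact hw j this)
    (by
      rw [Finset.sum_insert hnone, Finset.sum_image hinj]
      simp
      linarith [hSdef])
    (fun o ho => by
      cases o with
      | none => exact ha
      | some j =>
        have : j ∈ t := by simpa using ho
        exact hz j this)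
  rw [Finset.sum_insert hnone, Finset.sum_image hinj] at hkey
  simpa using hkey


/-- Theorem 1, feasibility part: every DFM iterate `x k` is
feasible for the barrier problem (P_ρ) — i.e. `∑ i, A i *ᵥ x k i = c` and
`x k i ∈ X̃ i` — and hence also feasible for the original problem (P). -/
theorem stmt_6
    (n m : ℕ) (hn : 0 < n) (d : Fin n → ℕ)
    (G : SimpleGraph (Fin n)) [DecidableRel G.Adj]
    -- local cost functions, `L i`-smooth
    (f : (i : Fin n) → EuclideanSpace ℝ (Fin (d i)) → ℝ)
    (Lf : Fin n → ℝ)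
    (hfdiff : ∀ i, Differentiable ℝ (f i))
    (hfsmooth : ∀ i, ∀ z w : EuclideanSpace ℝ (Fin (d i)),
      ‖gradient (f i) z - gradient (f i) w‖ ≤ Lf i * ‖z - w‖)
    -- local constraint functions, convex, β-smooth, β₁-Lipschitz on X i
    (q : Fin n → ℕ)
    (g : (i : Fin n) → Fin (q i) → EuclideanSpace ℝ (Fin (d i)) → ℝ)
    (β β₁ : ℝ)
    (hgconv : ∀ i j, ConvexOn ℝ Set.univ (g i j))
    (hgdiff : ∀ i j, Differentiable ℝ (g i j))
    (hgsmooth : ∀ i j, ∀ z w : EuclideanSpace ℝ (Fin (d i)),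
      ‖gradient (g i j) z - gradient (g i j) w‖ ≤ β * ‖z - w‖)
    (hglip : ∀ i j, ∀ z w : EuclideanSpace ℝ (Fin (d i)),
      (∀ l, g i l z ≤ 0) → (∀ l, g i l w ≤ 0) → |g i j z - g i j w| ≤ β₁ * ‖z - w‖)
    -- coupling data and Slater point
    (A : (i : Fin n) → Matrix (Fin m) (Fin (d i)) ℝ) (c : Fin m → ℝ)
    (hslater : ∃ xt : (i : Fin n) → EuclideanSpace ℝ (Fin (d i)),
      (∑ i, (A i).mulVec (xt i)) = c ∧ ∀ i j, g i j (xt i) < 0)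
    -- barrier parameter and barrier functions
    (ρ : ℝ) (hρ : 0 < ρ)
    (B : (i : Fin n) → EuclideanSpace ℝ (Fin (d i)) → ℝ)
    (hB : ∀ i z, B i z = ∑ j, -(g i j z)⁻¹)
    -- closed neighborhoods and step weights η
    (Nbar : Fin n → Finset (Fin n))
    (hNbar : ∀ i, Nbar i = insert i (G.neighborFinset i))
    (η : Fin n → ℝ)
    (hη : ∀ i, η i = (((Nbar i).sup (fun l => (Nbar l).card) : ℕ) : ℝ)⁻¹)
    -- DFM iterates, local search directions and quadratic surrogates
    (x : ℕ → (i : Fin n) → EuclideanSpace ℝ (Fin (d i)))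
    (p : ℕ → Fin n → (j : Fin n) → EuclideanSpace ℝ (Fin (d j)))
    (fsur : ℕ → (j : Fin n) → EuclideanSpace ℝ (Fin (d j)) → ℝ)
    (hfsur : ∀ k j z, fsur k j z =
      f j (x k j) + ⟪gradient (f j) (x k j), z - x k j⟫ + (Lf j / 2) * ‖z - x k j‖^2)
    -- x⁰ is feasible for the barrier problem (P_ρ)
    (hx0 : (∑ i, (A i).mulVec (x 0 i)) = c ∧ ∀ i j, g i j (x 0 i) < 0)
    -- (p k i ·) is a minimizer of the local subproblem of node i at iteration k
    (hpfeas : ∀ k i, (∑ j ∈ Nbar i, (A j).mulVec (p k i j)) = 0 ∧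
      ∀ j ∈ Nbar i, ∀ l, g j l (x k j + p k i j) < 0)
    (hpopt : ∀ k i, ∀ w : (j : Fin n) → EuclideanSpace ℝ (Fin (d j)),
      ((∑ j ∈ Nbar i, (A j).mulVec (w j)) = 0 ∧
        ∀ j ∈ Nbar i, ∀ l, g j l (x k j + w j) < 0) →
      (∑ j ∈ Nbar i, (fsur k j (x k j + p k i j) + ρ * B j (x k j + p k i j))) ≤
      (∑ j ∈ Nbar i, (fsur k j (x k j + w j) + ρ * B j (x k j + w j))))
    -- DFM update
    (hupd : ∀ k i, x (k+1) i = x k i + ∑ j ∈ Nbar i, η j • p k j i)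
    :
    ∀ k, ((∑ i, (A i).mulVec (x k i)) = c ∧ (∀ i j, g i j (x k i) < 0)) ∧
      ((∑ i, (A i).mulVec (x k i)) = c ∧ (∀ i j, g i j (x k i) ≤ 0)) := by
  classical
  -- symmetry of closed neighborhoods
  have hsym : ∀ i j : Fin n, j ∈ Nbar i ↔ i ∈ Nbar j := by
    intro i j
    simp only [hNbar, Finset.mem_insert, SimpleGraph.mem_neighborFinset]
    constructor
    · rintro (h | h)
      · exact Or.inl h.symm
      · exact Or.inr h.symm
    · rintro (h | h)
      · exact Or.inl h.symm
      · exact Or.inr h.symm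
  have hself : ∀ i : Fin n, i ∈ Nbar i := fun i => by simp [hNbar]
  -- properties of the weights η
  have ηnn : ∀ j, 0 ≤ η j := by
    intro j; rw [hη]; positivity
  have hsum_le : ∀ i, ∑ j ∈ Nbar i, η j ≤ 1 := by
    intro i
    have hcard : 0 < (Nbar i).card := Finset.card_pos.2 ⟨i, hself i⟩
    have hbound : ∀ j ∈ Nbar i, η j ≤ (((Nbar i).card : ℝ))⁻¹ := by
      intro j hj
      rw [hη]
      have hle : (Nbar i).card ≤ (Nbar j).sup (fun l => (Nbar l).card) :=
        Finset.le_sup (f := fun l => (Nbar l).card) ((hsym i j).1 hj)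
      have h1 : (0:ℝ) < ((Nbar i).card : ℝ) := by exact_mod_cast hcard
      have h2 : ((Nbar i).card : ℝ) ≤ (((Nbar j).sup (fun l => (Nbar l).card) : ℕ) : ℝ) := by
        exact_mod_cast hle
      exact inv_anti₀ h1 h2
    calc ∑ j ∈ Nbar i, η j ≤ ∑ _j ∈ Nbar i, (((Nbar i).card : ℝ))⁻¹ :=
          Finset.sum_le_sum hbound
      _ = 1 := by
          rw [Finset.sum_const, nsmul_eq_mul]
          field_simp
  -- mulVec linearity helper
  have hmv : ∀ (i : Fin n) (k : ℕ),
      (A i).mulVec (x (k+1) i)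
        = (A i).mulVec (x k i) + ∑ j ∈ Nbar i, η j • (A i).mulVec (p k j i) := by
    intro i k
    rw [hupd k i]
    show (A i).mulVecLin (x k i + ∑ j ∈ Nbar i, η j • p k j i)
        = (A i).mulVecLin (x k i) + ∑ j ∈ Nbar i, η j • (A i).mulVecLin (p k j i)
    rw [map_add, WithLp.ofLp_sum, map_sum]
    simp [map_smul]
  -- main induction
  have main : ∀ k, (∑ i, (A i).mulVec (x k i)) = c ∧ ∀ i j, g i j (x k i) < 0 := by
    intro k
    induction k with
    | zero => exact hx0
    | succ k ih =>
      constructor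
      · -- linear feasibility
        have hzero : (∑ i, ∑ j ∈ Nbar i, η j • (A i).mulVec (p k j i)) = 0 := by
          have e1 : ∀ i : Fin n, (∑ j ∈ Nbar i, η j • (A i).mulVec (p k j i))
              = ∑ j : Fin n, if j ∈ Nbar i then η j • (A i).mulVec (p k j i) else 0 := by
            intro i
            rw [Finset.sum_ite_mem, Finset.univ_inter]
          calc (∑ i, ∑ j ∈ Nbar i, η j • (A i).mulVec (p k j i))
              = ∑ i : Fin n, ∑ j : Fin n,
                  if j ∈ Nbar i then η j • (A i).mulVec (p k j i) else 0 :=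
                Finset.sum_congr rfl (fun i _ => e1 i)
            _ = ∑ j : Fin n, ∑ i : Fin n,
                  if j ∈ Nbar i then η j • (A i).mulVec (p k j i) else 0 :=
                Finset.sum_comm
            _ = ∑ j : Fin n, ∑ i : Fin n,
                  if i ∈ Nbar j then η j • (A i).mulVec (p k j i) else 0 := by
                refine Finset.sum_congr rfl fun j _ => Finset.sum_congr rfl fun i _ => ?_
                exact if_congr (hsym i j) rfl rfl
            _ = ∑ j : Fin n, ∑ i ∈ Nbar j, η j • (A i).mulVec (p k j i) := by
                refine Finset.sum_congr rfl fun j _ => ?_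
                rw [Finset.sum_ite_mem, Finset.univ_inter]
            _ = ∑ j : Fin n, η j • ∑ i ∈ Nbar j, (A i).mulVec (p k j i) := by
                refine Finset.sum_congr rfl fun j _ => ?_
                rw [Finset.smul_sum]
            _ = 0 := by
                refine Finset.sum_eq_zero fun j _ => ?_
                rw [(hpfeas k j).1, smul_zero]
        calc (∑ i, (A i).mulVec (x (k+1) i))
            = ∑ i, ((A i).mulVec (x k i) + ∑ j ∈ Nbar i, η j • (A i).mulVec (p k j i)) :=
              Finset.sum_congr rfl (fun i _ => hmv i k)
          _ = (∑ i, (A i).mulVec (x k i))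
              + ∑ i, ∑ j ∈ Nbar i, η j • (A i).mulVec (p k j i) := Finset.sum_add_distrib
          _ = c + 0 := by rw [ih.1, hzero]
          _ = c := add_zero c
      · -- strict constraint feasibility
        intro i l
        have hx1 : x (k+1) i
            = (1 - ∑ j ∈ Nbar i, η j) • x k i + ∑ j ∈ Nbar i, η j • (x k i + p k j i) := by
          have e : ∑ j ∈ Nbar i, η j • (x k i + p k j i)
              = (∑ j ∈ Nbar i, η j) • x k i + ∑ j ∈ Nbar i, η j • p k j i := by
            rw [Finset.sum_smul]
            rw [← Finset.sum_add_distrib]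
            exact Finset.sum_congr rfl fun j _ => smul_add (η j) _ _
          rw [hupd k i, e, sub_smul, one_smul]
          abel
        have hset : Convex ℝ {y : EuclideanSpace ℝ (Fin (d i)) | g i l y < 0} := by
          have h := (hgconv i l).convex_lt 0
          simpa [Set.sep_univ] using h
        have hmem := combo_mem' hset (Nbar i) η (fun j => x k i + p k j i) (x k i)
          (ih.2 i l) (fun j _ => ηnn j)
          (fun j hj => (hpfeas k j).2 i ((hsym i j).1 hj) l)
          (hsum_le i)
        rw [hx1]
        exact hmem
  intro k
  exact ⟨main k, (main k).1, fun i j => le_of_lt ((main k).2 i j)⟩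
end

section
/- Under the DFM setup, the objective value of the barrier problem is monotonically non-increasing along the DFM iterates: F(x^{k+1}) ≤ F(x^k) for all k ≥ 0, and consequently F(x^k) ≤ F(x^0) for all k ≥ 0. -/
open RealInnerProductSpace

section helpers

lemma quad_convexOn {E : Type*} [NormedAddCommGroup E] [InnerProductSpace ℝ E]
    (a v : E) (c0 L : ℝ) (hL : 0 ≤ L) :
    ConvexOn ℝ Set.univ (fun z => c0 + ⟪v, z - a⟫ + L / 2 * ‖z - a‖ ^ 2) := by
  refine ⟨convex_univ, ?_⟩
  intro X _ Y _ s t hs ht hst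
  have hcomb : s • X + t • Y - a = s • (X - a) + t • (Y - a) := by
    have ha : s • a + t • a = a := by rw [← add_smul, hst, one_smul]
    calc s • X + t • Y - a = s • X + t • Y - (s • a + t • a) := by rw [ha]
      _ = s • (X - a) + t • (Y - a) := by rw [smul_sub, smul_sub]; abel
  set u := X - a with hu
  set w := Y - a with hw
  have hinner : ⟪v, s • u + t • w⟫ = s * ⟪v, u⟫ + t * ⟪v, w⟫ := by
    rw [inner_add_right, real_inner_smul_right, real_inner_smul_right]
  have hexp : ‖s • u + t • w‖ ^ 2 = s^2 * ‖u‖^2 + 2 * (s * t * ⟪u, w⟫) + t^2 * ‖w‖^2 := by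
    rw [norm_add_sq_real, norm_smul, norm_smul, real_inner_smul_left, real_inner_smul_right,
      Real.norm_eq_abs, Real.norm_eq_abs, abs_of_nonneg hs, abs_of_nonneg ht]
    ring
  have hsub : ‖u - w‖ ^ 2 = ‖u‖^2 - 2 * ⟪u, w⟫ + ‖w‖^2 := by
    rw [norm_sub_sq_real]
  have key : s * ‖u‖^2 + t * ‖w‖^2 - (s^2 * ‖u‖^2 + 2 * (s * t * ⟪u, w⟫) + t^2 * ‖w‖^2)
      = s * t * ‖u - w‖^2 := by
    have ht' : t = 1 - s := by linarith
    rw [ht', hsub]; ring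
  have hq : ‖s • u + t • w‖ ^ 2 ≤ s * ‖u‖^2 + t * ‖w‖^2 := by
    have h0 : 0 ≤ s * t * ‖u - w‖^2 :=
      mul_nonneg (mul_nonneg hs ht) (sq_nonneg _)
    linarith [hexp, key]
  have hq2 : L / 2 * ‖s • u + t • w‖ ^ 2 ≤ L / 2 * (s * ‖u‖^2 + t * ‖w‖^2) :=
    mul_le_mul_of_nonneg_left hq (by linarith)
  simp only [smul_eq_mul]
  rw [hcomb, ← hu, ← hw, hinner]
  have hc0' : s * c0 + t * c0 = c0 := by rw [← add_mul, hst, one_mul]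
  have hd' : s * (L / 2 * ‖u‖^2) + t * (L / 2 * ‖w‖^2) = L / 2 * (s * ‖u‖^2 + t * ‖w‖^2) := by
    ring
  linarith [hq2, hc0', hd']

lemma neg_inv_le_neg_inv {w c : ℝ} (hw : w < 0) (hc : c < 0) (hle : w ≤ c) :
    -w⁻¹ ≤ -c⁻¹ := by
  have h1 : c⁻¹ ≤ w⁻¹ := (inv_le_inv_of_neg hc hw).2 hle
  linarith

lemma neg_inv_convexOn {E : Type*} [NormedAddCommGroup E] [NormedSpace ℝ E]
    {S : Set E} (hS : Convex ℝ S) {g : E → ℝ} (hg : ConvexOn ℝ Set.univ g)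
    (hneg : ∀ z ∈ S, g z < 0) : ConvexOn ℝ S (fun z => -(g z)⁻¹) := by
  refine ⟨hS, ?_⟩
  intro X hX Y hY a b ha hb hab
  simp only [smul_eq_mul]
  have hu : g X < 0 := hneg X hX
  have hv : g Y < 0 := hneg Y hY
  have hwmem : a • X + b • Y ∈ S := hS hX hY ha hb hab
  have hw : g (a • X + b • Y) < 0 := hneg _ hwmem
  have hwle : g (a • X + b • Y) ≤ a * g X + b * g Y := by
    have := hg.2 (Set.mem_univ X) (Set.mem_univ Y) ha hb hab
    simpa [smul_eq_mul] using this
  have hcomb : a * g X + b * g Y < 0 := by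
    have h1 : a * g X ≤ a * (max (g X) (g Y)) :=
      mul_le_mul_of_nonneg_left (le_max_left _ _) ha
    have h2 : b * g Y ≤ b * (max (g X) (g Y)) :=
      mul_le_mul_of_nonneg_left (le_max_right _ _) hb
    have h3 : max (g X) (g Y) < 0 := max_lt hu hv
    nlinarith
  -- step A : monotonicity
  have stepA : -(g (a • X + b • Y))⁻¹ ≤ -(a * g X + b * g Y)⁻¹ :=
    neg_inv_le_neg_inv hw hcomb hwle
  -- step B : convexity of -inv on negatives
  set U := -(g X) with hU
  set V := -(g Y) with hV
  have hU0 : 0 < U := by simp [hU]; linarith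
  have hV0 : 0 < V := by simp [hV]; linarith
  have hgX : g X = -U := by simp [hU]
  have hgY : g Y = -V := by simp [hV]
  have hc0 : 0 < a * U + b * V := by nlinarith
  have stepB : -(a * g X + b * g Y)⁻¹ ≤ a * (-(g X)⁻¹) + b * (-(g Y)⁻¹) := by
    rw [hgX, hgY]
    have hrw1 : -(a * -U + b * -V)⁻¹ = (a * U + b * V)⁻¹ := by
      rw [show a * -U + b * -V = -(a * U + b * V) by ring, inv_neg, neg_neg]
    have hrw2 : a * (-(-U)⁻¹) + b * (-(-V)⁻¹) = a * U⁻¹ + b * V⁻¹ := by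
      rw [inv_neg, inv_neg]; ring
    rw [hrw1, hrw2]
    have h1 : U * V ≤ (a * V + b * U) * (a * U + b * V) := by
      have hb2 : b = 1 - a := by linarith
      subst hb2
      nlinarith [mul_nonneg (mul_nonneg ha hb) (sq_nonneg (U - V))]
    have h2 : a * U⁻¹ + b * V⁻¹ = (a * V + b * U) * (U * V)⁻¹ := by
      field_simp
    rw [h2]
    rw [show (a * U + b * V)⁻¹ = 1 / (a * U + b * V) by rw [one_div],
      show (a * V + b * U) * (U * V)⁻¹ = (a * V + b * U) / (U * V) by rw [div_eq_mul_inv],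
      div_le_div_iff₀ hc0 (mul_pos hU0 hV0)]
    nlinarith [h1]
  linarith

lemma convexOn_finset_sum {ι E : Type*} [NormedAddCommGroup E] [NormedSpace ℝ E]
    {S : Set E} (hS : Convex ℝ S) (t : Finset ι) (f : ι → E → ℝ)
    (h : ∀ j ∈ t, ConvexOn ℝ S (f j)) :
    ConvexOn ℝ S (fun z => ∑ j ∈ t, f j z) := by
  classical
  revert h
  refine Finset.induction_on t ?_ ?_
  · intro _; simpa using convexOn_const (0 : ℝ) hS
  · intro a tt hnot ih h
    simp only [Finset.sum_insert hnot]
    exact (h a (Finset.mem_insert_self _ _)).add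
      (ih fun j hj => h j (Finset.mem_insert_of_mem hj))

lemma descent_lemma {E : Type*} [NormedAddCommGroup E] [InnerProductSpace ℝ E] [CompleteSpace E]
    (f : E → ℝ) (L : ℝ) (hf : Differentiable ℝ f)
    (hL : ∀ z w : E, ‖gradient f z - gradient f w‖ ≤ L * ‖z - w‖)
    (a z : E) : f z ≤ f a + ⟪gradient f a, z - a⟫ + L / 2 * ‖z - a‖ ^ 2 := by
  set d := z - a with hd
  have curve : ∀ t : ℝ, HasDerivAt (fun s : ℝ => a + s • d) d t := by
    intro t
    simpa using ((hasDerivAt_id t).smul_const d).const_add a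
  have comp : ∀ t : ℝ, HasDerivAt (fun s : ℝ => f (a + s • d)) ⟪gradient f (a + t • d), d⟫ t := by
    intro t
    have h1 := ((hf (a + t • d)).hasGradientAt.hasFDerivAt).comp_hasDerivAt t (curve t)
    simpa [InnerProductSpace.toDual_apply_apply, Function.comp_def] using h1
  set φ : ℝ → ℝ := fun t => f (a + t • d) - t * ⟪gradient f a, d⟫ - L / 2 * t ^ 2 * ‖d‖ ^ 2
    with hφdef
  have hφd : ∀ t : ℝ,
      HasDerivAt φ (⟪gradient f (a + t • d), d⟫ - ⟪gradient f a, d⟫ - L * t * ‖d‖ ^ 2) t := by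
    intro t
    have h2 : HasDerivAt (fun t : ℝ => t * ⟪gradient f a, d⟫) ⟪gradient f a, d⟫ t := by
      simpa using (hasDerivAt_id t).mul_const (⟪gradient f a, d⟫)
    have h3 : HasDerivAt (fun t : ℝ => L / 2 * t ^ 2 * ‖d‖ ^ 2) (L * t * ‖d‖ ^ 2) t := by
      have h4 := ((hasDerivAt_pow 2 t).const_mul (L / 2)).mul_const (‖d‖ ^ 2)
      refine h4.congr_deriv ?_
      ring
    exact ((comp t).sub h2).sub h3
  have hmono : AntitoneOn φ (Set.Icc 0 1) := by
    apply antitoneOn_of_deriv_nonpos (convex_Icc 0 1)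
    · exact fun t _ => (hφd t).continuousAt.continuousWithinAt
    · exact fun t _ => (hφd t).differentiableAt.differentiableWithinAt
    · intro t ht
      rw [interior_Icc] at ht
      rw [(hφd t).deriv]
      have hg := hL (a + t • d) a
      have hnn : ‖a + t • d - a‖ = t * ‖d‖ := by
        rw [add_sub_cancel_left, norm_smul, Real.norm_eq_abs, abs_of_nonneg ht.1.le]
      rw [hnn] at hg
      have hip : ⟪gradient f (a + t • d) - gradient f a, d⟫
          ≤ ‖gradient f (a + t • d) - gradient f a‖ * ‖d‖ := real_inner_le_norm _ _
      have hexp : ⟪gradient f (a + t • d) - gradient f a, d⟫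
          = ⟪gradient f (a + t • d), d⟫ - ⟪gradient f a, d⟫ := by
        rw [inner_sub_left]
      have hbound : ‖gradient f (a + t • d) - gradient f a‖ * ‖d‖ ≤ L * (t * ‖d‖) * ‖d‖ :=
        mul_le_mul_of_nonneg_right hg (norm_nonneg d)
      nlinarith [hip, hexp, hbound]
  have h01 : φ 1 ≤ φ 0 :=
    hmono (Set.left_mem_Icc.2 zero_le_one) (Set.right_mem_Icc.2 zero_le_one) zero_le_one
  have hz : a + (1 : ℝ) • d = z := by rw [one_smul, hd]; abel
  have h0 : a + (0 : ℝ) • d = a := by rw [zero_smul, add_zero]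
  simp only [hφdef, hz, h0] at h01
  rw [hd] at *
  nlinarith [h01]

end helpers


/-- descent of the barrier objective: along the DFM iterates the
barrier objective `F` is monotonically non-increasing, `F (x (k+1)) ≤ F (x k)`
for all `k`, and consequently `F (x k) ≤ F (x 0)` for all `k`. -/
theorem stmt_7
    (n m : ℕ) (hn : 0 < n) (d : Fin n → ℕ)
    (G : SimpleGraph (Fin n)) [DecidableRel G.Adj]
    -- local cost functions, `L i`-smooth
    (f : (i : Fin n) → EuclideanSpace ℝ (Fin (d i)) → ℝ)
    (Lf : Fin n → ℝ)
    (hfdiff : ∀ i, Differentiable ℝ (f i))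
    (hfsmooth : ∀ i, ∀ z w : EuclideanSpace ℝ (Fin (d i)),
      ‖gradient (f i) z - gradient (f i) w‖ ≤ Lf i * ‖z - w‖)
    -- local constraint functions, convex, β-smooth, β₁-Lipschitz on X i
    (q : Fin n → ℕ)
    (g : (i : Fin n) → Fin (q i) → EuclideanSpace ℝ (Fin (d i)) → ℝ)
    (β β₁ : ℝ)
    (hgconv : ∀ i j, ConvexOn ℝ Set.univ (g i j))
    (hgdiff : ∀ i j, Differentiable ℝ (g i j))
    (hgsmooth : ∀ i j, ∀ z w : EuclideanSpace ℝ (Fin (d i)),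
      ‖gradient (g i j) z - gradient (g i j) w‖ ≤ β * ‖z - w‖)
    (hglip : ∀ i j, ∀ z w : EuclideanSpace ℝ (Fin (d i)),
      (∀ l, g i l z ≤ 0) → (∀ l, g i l w ≤ 0) → |g i j z - g i j w| ≤ β₁ * ‖z - w‖)
    -- coupling data and Slater point
    (A : (i : Fin n) → Matrix (Fin m) (Fin (d i)) ℝ) (c : Fin m → ℝ)
    (hslater : ∃ xt : (i : Fin n) → EuclideanSpace ℝ (Fin (d i)),
      (∑ i, (A i).mulVec (xt i)) = c ∧ ∀ i j, g i j (xt i) < 0)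
    -- barrier parameter and barrier functions
    (ρ : ℝ) (hρ : 0 < ρ)
    (B : (i : Fin n) → EuclideanSpace ℝ (Fin (d i)) → ℝ)
    (hB : ∀ i z, B i z = ∑ j, -(g i j z)⁻¹)
    -- closed neighborhoods and step weights η
    (Nbar : Fin n → Finset (Fin n))
    (hNbar : ∀ i, Nbar i = insert i (G.neighborFinset i))
    (η : Fin n → ℝ)
    (hη : ∀ i, η i = (((Nbar i).sup (fun l => (Nbar l).card) : ℕ) : ℝ)⁻¹)
    -- DFM iterates, local search directions and quadratic surrogates
    (x : ℕ → (i : Fin n) → EuclideanSpace ℝ (Fin (d i)))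
    (p : ℕ → Fin n → (j : Fin n) → EuclideanSpace ℝ (Fin (d j)))
    (fsur : ℕ → (j : Fin n) → EuclideanSpace ℝ (Fin (d j)) → ℝ)
    (hfsur : ∀ k j z, fsur k j z =
      f j (x k j) + ⟪gradient (f j) (x k j), z - x k j⟫ + (Lf j / 2) * ‖z - x k j‖^2)
    -- x⁰ is feasible for the barrier problem (P_ρ)
    (hx0 : (∑ i, (A i).mulVec (x 0 i)) = c ∧ ∀ i j, g i j (x 0 i) < 0)
    -- (p k i ·) is a minimizer of the local subproblem of node i at iteration k
    (hpfeas : ∀ k i, (∑ j ∈ Nbar i, (A j).mulVec (p k i j)) = 0 ∧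
      ∀ j ∈ Nbar i, ∀ l, g j l (x k j + p k i j) < 0)
    (hpopt : ∀ k i, ∀ w : (j : Fin n) → EuclideanSpace ℝ (Fin (d j)),
      ((∑ j ∈ Nbar i, (A j).mulVec (w j)) = 0 ∧
        ∀ j ∈ Nbar i, ∀ l, g j l (x k j + w j) < 0) →
      (∑ j ∈ Nbar i, (fsur k j (x k j + p k i j) + ρ * B j (x k j + p k i j))) ≤
      (∑ j ∈ Nbar i, (fsur k j (x k j + w j) + ρ * B j (x k j + w j))))
    -- DFM update
    (hupd : ∀ k i, x (k+1) i = x k i + ∑ j ∈ Nbar i, η j • p k j i)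
    -- the barrier objective
    (F : ((i : Fin n) → EuclideanSpace ℝ (Fin (d i))) → ℝ)
    (hF : ∀ y, F y = ∑ i, (f i (y i) + ρ * B i (y i))) :
    (∀ k, F (x (k+1)) ≤ F (x k)) ∧ (∀ k, F (x k) ≤ F (x 0)) := by
  classical
  -- basic combinatorial facts
  have hself : ∀ i, i ∈ Nbar i := fun i => by
    rw [hNbar]; exact Finset.mem_insert_self _ _
  have hsym : ∀ i j : Fin n, j ∈ Nbar i → i ∈ Nbar j := by
    intro i j hj
    rw [hNbar] at hj ⊢
    rcases Finset.mem_insert.1 hj with h | h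
    · subst h; exact Finset.mem_insert_self _ _
    · refine Finset.mem_insert_of_mem ?_
      rw [SimpleGraph.mem_neighborFinset] at h ⊢
      exact h.symm
  have hcardpos : ∀ i, 0 < (Nbar i).card := fun i => Finset.card_pos.2 ⟨i, hself i⟩
  have hηpos : ∀ j, 0 < η j := by
    intro j
    rw [hη]
    refine inv_pos.2 ?_
    exact_mod_cast lt_of_lt_of_le (hcardpos j)
      (Finset.le_sup (f := fun l => (Nbar l).card) (hself j))
  have hηle : ∀ i j, j ∈ Nbar i → η j ≤ ((Nbar i).card : ℝ)⁻¹ := by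
    intro i j hj
    rw [hη]
    refine inv_anti₀ (by exact_mod_cast hcardpos i) ?_
    exact_mod_cast Finset.le_sup (f := fun l => (Nbar l).card) (hsym i j hj)
  set s : Fin n → ℝ := fun i => ∑ j ∈ Nbar i, η j with hs
  have hs1 : ∀ i, s i ≤ 1 := by
    intro i
    calc s i ≤ ∑ _j ∈ Nbar i, ((Nbar i).card : ℝ)⁻¹ :=
          Finset.sum_le_sum (fun j hj => hηle i j hj)
      _ = 1 := by
          rw [Finset.sum_const, nsmul_eq_mul]
          exact mul_inv_cancel₀ (by exact_mod_cast (hcardpos i).ne')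
  have hsum_s : ∀ i, (1 - s i) + ∑ j ∈ Nbar i, η j = 1 := by
    intro i; rw [hs]; ring_nf
  -- combination representation of the update
  have hrep : ∀ k i, x (k+1) i
      = (1 - s i) • x k i + ∑ j ∈ Nbar i, η j • (x k i + p k j i) := by
    intro k i
    rw [hupd]
    have h1 : ∑ j ∈ Nbar i, η j • (x k i + p k j i)
        = s i • x k i + ∑ j ∈ Nbar i, η j • p k j i := by
      rw [hs]
      simp only [smul_add]
      rw [Finset.sum_add_distrib, Finset.sum_smul]
    rw [h1, sub_smul, one_smul]
    abel
  -- strict feasibility of all iterates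
  have hfeas : ∀ k i l, g i l (x k i) < 0 := by
    intro k
    induction k with
    | zero => exact hx0.2
    | succ k ih =>
      intro i l
      have key := (hgconv i l).map_add_sum_le (t := Nbar i) (w := η)
        (p := fun j => x k i + p k j i) (v := 1 - s i) (q := x k i)
        (fun j _ => (hηpos j).le) (hsum_s i)
        (fun j _ => Set.mem_univ _) (by linarith [hs1 i]) (Set.mem_univ _)
      rw [← hrep k i] at key
      simp only [smul_eq_mul] at key
      have hterm : ∀ j ∈ (Nbar i).erase i, η j * g i l (x k i + p k j i) ≤ 0 := by
        intro j hj
        exact mul_nonpos_of_nonneg_of_nonpos (hηpos j).le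
          ((hpfeas k j).2 i (hsym i j (Finset.mem_of_mem_erase hj)) l).le
      have hstrict : η i * g i l (x k i + p k i i) < 0 :=
        mul_neg_of_pos_of_neg (hηpos i) ((hpfeas k i).2 i (hself i) l)
      have hsumneg : ∑ j ∈ Nbar i, η j * g i l (x k i + p k j i) < 0 := by
        rw [← Finset.add_sum_erase _ _ (hself i)]
        have h2 : ∑ j ∈ (Nbar i).erase i, η j * g i l (x k i + p k j i) ≤ 0 :=
          Finset.sum_nonpos hterm
        linarith
      have hfirst : (1 - s i) * g i l (x k i) ≤ 0 :=
        mul_nonpos_of_nonneg_of_nonpos (by linarith [hs1 i]) (ih i l).le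
      calc g i l (x (k+1) i) ≤ _ := key
        _ < 0 := by linarith
  -- convexity of the surrogates
  have hfsurconv : ∀ k i,
      ConvexOn ℝ (Set.univ : Set (EuclideanSpace ℝ (Fin (d i)))) (fsur k i) := by
    intro k i
    have heq : fsur k i = fun z =>
        f i (x k i) + ⟪gradient (f i) (x k i), z - x k i⟫ + (Lf i / 2) * ‖z - x k i‖^2 :=
      funext (hfsur k i)
    rcases subsingleton_or_nontrivial (EuclideanSpace ℝ (Fin (d i))) with hsub | hnt
    · refine ⟨convex_univ, ?_⟩
      intro X _ Y _ a b ha hb hab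
      have hxy : X = Y := Subsingleton.elim _ _
      subst hxy
      have hc : a • X + b • X = X := by rw [← add_smul, hab, one_smul]
      rw [hc, smul_eq_mul, smul_eq_mul, ← add_mul, hab, one_mul]
    · have hL : 0 ≤ Lf i := by
        obtain ⟨u, v, huv⟩ := exists_pair_ne (EuclideanSpace ℝ (Fin (d i)))
        have h1 := hfsmooth i u v
        have h2 : 0 < ‖u - v‖ := by
          rw [norm_pos_iff, sub_ne_zero]; exact huv
        nlinarith [norm_nonneg (gradient (f i) u - gradient (f i) v)]
      rw [heq]
      exact quad_convexOn (x k i) (gradient (f i) (x k i)) (f i (x k i)) (Lf i) hL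
  -- convexity of the barrier and of the local objective
  set S : (i : Fin n) → Set (EuclideanSpace ℝ (Fin (d i))) :=
    fun i => {z | ∀ l, g i l z < 0} with hSdef
  have hSconv : ∀ i, Convex ℝ (S i) := by
    intro i
    have hEq : S i = ⋂ l, {z | g i l z < 0} := by
      ext z; simp [hSdef]
    rw [hEq]
    refine convex_iInter fun l => ?_
    simpa using (hgconv i l).convex_lt 0
  have hBconv : ∀ i, ConvexOn ℝ (S i) (B i) := by
    intro i
    have hBeq : B i = fun z => ∑ l : Fin (q i), -(g i l z)⁻¹ := funext (hB i)
    rw [hBeq]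
    refine convexOn_finset_sum (hSconv i) Finset.univ _ ?_
    intro l _
    exact neg_inv_convexOn (hSconv i) (hgconv i l) (fun z hz => hz l)
  have hφconv : ∀ k i, ConvexOn ℝ (S i) (fun z => fsur k i z + ρ * B i z) := by
    intro k i
    have h1 : ConvexOn ℝ (S i) (fun z => ρ * B i z) := by
      have h2 := (hBconv i).smul (c := ρ) hρ.le
      simpa [smul_eq_mul] using h2
    exact ((hfsurconv k i).subset (Set.subset_univ _) (hSconv i)).add h1
  -- descent lemma
  have hdesc : ∀ k i z, f i z ≤ fsur k i z := by
    intro k i z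
    rw [hfsur]
    exact descent_lemma (f i) (Lf i) (hfdiff i) (hfsmooth i) (x k i) z
  have hfsurx : ∀ k i, fsur k i (x k i) = f i (x k i) := by
    intro k i
    rw [hfsur]
    simp
  -- one-step descent
  have hstep : ∀ k, F (x (k+1)) ≤ F (x k) := by
    intro k
    rw [hF, hF]
    have step1 : ∀ i, f i (x (k+1) i) + ρ * B i (x (k+1) i)
        ≤ (1 - s i) * (fsur k i (x k i) + ρ * B i (x k i))
          + ∑ j ∈ Nbar i, η j * (fsur k i (x k i + p k j i) + ρ * B i (x k i + p k j i)) := by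
      intro i
      have h1 := hdesc k i (x (k+1) i)
      have h2 := (hφconv k i).map_add_sum_le (t := Nbar i) (w := η)
        (p := fun j => x k i + p k j i) (v := 1 - s i) (q := x k i)
        (fun j _ => (hηpos j).le) (hsum_s i)
        (fun j hj => fun l => (hpfeas k j).2 i (hsym i j hj) l)
        (by linarith [hs1 i]) (fun l => hfeas k i l)
      rw [← hrep k i] at h2
      simp only [smul_eq_mul] at h2
      linarith
    have step2 : ∑ i, (f i (x (k+1) i) + ρ * B i (x (k+1) i))
        ≤ ∑ i, ((1 - s i) * (fsur k i (x k i) + ρ * B i (x k i)))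
          + ∑ i, ∑ j ∈ Nbar i, η j * (fsur k i (x k i + p k j i) + ρ * B i (x k i + p k j i)) := by
      rw [← Finset.sum_add_distrib]
      exact Finset.sum_le_sum fun i _ => step1 i
    have hcomm : ∀ x' y' : Fin n, x' ∈ Finset.univ ∧ y' ∈ Nbar x'
        ↔ x' ∈ Nbar y' ∧ y' ∈ Finset.univ := by
      intro x' y'
      constructor
      · intro h; exact ⟨hsym _ _ h.2, Finset.mem_univ _⟩
      · intro h; exact ⟨Finset.mem_univ _, hsym _ _ h.1⟩
    have swap1 : ∑ i : Fin n, ∑ j ∈ Nbar i,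
          η j * (fsur k i (x k i + p k j i) + ρ * B i (x k i + p k j i))
        = ∑ j : Fin n, ∑ i ∈ Nbar j,
          η j * (fsur k i (x k i + p k j i) + ρ * B i (x k i + p k j i)) :=
      Finset.sum_comm' hcomm
    have opt : ∀ j, ∑ i ∈ Nbar j, (fsur k i (x k i + p k j i) + ρ * B i (x k i + p k j i))
        ≤ ∑ i ∈ Nbar j, (fsur k i (x k i) + ρ * B i (x k i)) := by
      intro j
      have h0 := hpopt k j (fun _ => 0)
        ⟨by simp [Matrix.mulVec_zero], fun i _ l => by simpa using hfeas k i l⟩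
      simpa using h0
    have step3 : ∑ j : Fin n, ∑ i ∈ Nbar j,
          η j * (fsur k i (x k i + p k j i) + ρ * B i (x k i + p k j i))
        ≤ ∑ j : Fin n, ∑ i ∈ Nbar j, η j * (fsur k i (x k i) + ρ * B i (x k i)) := by
      refine Finset.sum_le_sum fun j _ => ?_
      rw [← Finset.mul_sum, ← Finset.mul_sum]
      exact mul_le_mul_of_nonneg_left (opt j) (hηpos j).le
    have swap2 : ∑ j : Fin n, ∑ i ∈ Nbar j, η j * (fsur k i (x k i) + ρ * B i (x k i))
        = ∑ i : Fin n, s i * (fsur k i (x k i) + ρ * B i (x k i)) := by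
      have h4 : ∑ j : Fin n, ∑ i ∈ Nbar j, η j * (fsur k i (x k i) + ρ * B i (x k i))
          = ∑ i : Fin n, ∑ j ∈ Nbar i, η j * (fsur k i (x k i) + ρ * B i (x k i)) := by
        refine (Finset.sum_comm' ?_).symm
        intro x' y'
        constructor
        · intro h; exact ⟨hsym _ _ h.2, Finset.mem_univ _⟩
        · intro h; exact ⟨Finset.mem_univ _, hsym _ _ h.1⟩
      rw [h4]
      refine Finset.sum_congr rfl fun i _ => ?_
      rw [hs, ← Finset.sum_mul]
    have final : ∑ i, ((1 - s i) * (fsur k i (x k i) + ρ * B i (x k i)))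
          + ∑ i, s i * (fsur k i (x k i) + ρ * B i (x k i))
        = ∑ i, (f i (x k i) + ρ * B i (x k i)) := by
      rw [← Finset.sum_add_distrib]
      refine Finset.sum_congr rfl fun i _ => ?_
      rw [hfsurx k i]
      ring
    calc ∑ i, (f i (x (k+1) i) + ρ * B i (x (k+1) i))
        ≤ ∑ i, ((1 - s i) * (fsur k i (x k i) + ρ * B i (x k i)))
          + ∑ i, ∑ j ∈ Nbar i, η j * (fsur k i (x k i + p k j i) + ρ * B i (x k i + p k j i)) :=
          step2
      _ ≤ ∑ i, ((1 - s i) * (fsur k i (x k i) + ρ * B i (x k i)))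
          + ∑ i, s i * (fsur k i (x k i) + ρ * B i (x k i)) := by
          rw [swap1, ← swap2]
          linarith [step3]
      _ = ∑ i, (f i (x k i) + ρ * B i (x k i)) := final
  refine ⟨hstep, ?_⟩
  intro k
  induction k with
  | zero => exact le_refl _
  | succ k ih => exact (hstep k).trans ih
end

section
/- Suppose every f_i is convex. Let x̃* be an optimal solution of the barrier problem (P_ρ), let f̲ be any lower bound on the optimal value f* of (P), let x' be any feasible point of (P_ρ), and let ε > 0. If either (i) f(x') − f̲ ≤ ε/2 and 0 < ρ ≤ ε/(2B(x')), or (ii) f(x') − f̲ > ε/2 and 0 < ρ ≤ ε²/(4(f(x') − f̲)B(x')), then f(x̃*) − f* ≤ ε. -/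
/-- Lemma 2, optimality gap of the barrier problem.
All `f i` convex (and differentiable).  Let `x̃*` be optimal for the barrier
problem (P_ρ), `x*` optimal for (P), `f̲ ≤ f*` a lower bound, `x'` any feasible
point of (P_ρ) and `ε > 0`.  If either
(i) `f(x') − f̲ ≤ ε/2` and `0 < ρ ≤ ε/(2 B(x'))`, or
(ii) `f(x') − f̲ > ε/2` and `0 < ρ ≤ ε²/(4 (f(x') − f̲) B(x'))`,
then `f(x̃*) − f* ≤ ε`. -/
theorem stmt_11 (n m : ℕ) (d : Fin n → ℕ)
    (f : (i : Fin n) → EuclideanSpace ℝ (Fin (d i)) → ℝ)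
    (hfconv : ∀ i, ConvexOn ℝ Set.univ (f i))
    (hfdiff : ∀ i, Differentiable ℝ (f i))
    (q : Fin n → ℕ)
    (g : (i : Fin n) → Fin (q i) → EuclideanSpace ℝ (Fin (d i)) → ℝ)
    (hgconv : ∀ i j, ConvexOn ℝ Set.univ (g i j))
    (A : (i : Fin n) → Matrix (Fin m) (Fin (d i)) ℝ) (c : Fin m → ℝ)
    (ρ : ℝ)
    (B : (i : Fin n) → EuclideanSpace ℝ (Fin (d i)) → ℝ)
    (hB : ∀ i z, B i z = ∑ j, -(g i j z)⁻¹)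
    -- x* : an optimal solution of (P)
    (xstar : (i : Fin n) → EuclideanSpace ℝ (Fin (d i)))
    (hxstarfeas : (∑ i, (A i).mulVec (xstar i)) = c ∧ ∀ i j, g i j (xstar i) ≤ 0)
    (hxstaropt : ∀ y : (i : Fin n) → EuclideanSpace ℝ (Fin (d i)),
      ((∑ i, (A i).mulVec (y i)) = c ∧ ∀ i j, g i j (y i) ≤ 0) →
      (∑ i, f i (xstar i)) ≤ ∑ i, f i (y i))
    -- x̃* : an optimal solution of the barrier problem (P_ρ)
    (xt : (i : Fin n) → EuclideanSpace ℝ (Fin (d i)))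
    (hxtfeas : (∑ i, (A i).mulVec (xt i)) = c ∧ ∀ i j, g i j (xt i) < 0)
    (hxtopt : ∀ y : (i : Fin n) → EuclideanSpace ℝ (Fin (d i)),
      ((∑ i, (A i).mulVec (y i)) = c ∧ ∀ i j, g i j (y i) < 0) →
      (∑ i, (f i (xt i) + ρ * B i (xt i))) ≤ ∑ i, (f i (y i) + ρ * B i (y i)))
    -- f̲ : a lower bound on the optimal value f* of (P)
    (flow : ℝ) (hflow : flow ≤ ∑ i, f i (xstar i))
    -- x' : a feasible point of (P_ρ)
    (x' : (i : Fin n) → EuclideanSpace ℝ (Fin (d i)))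
    (hx' : (∑ i, (A i).mulVec (x' i)) = c ∧ ∀ i j, g i j (x' i) < 0)
    (ε : ℝ) (hε : 0 < ε)
    (hρ : ((∑ i, f i (x' i)) - flow ≤ ε / 2 ∧
            0 < ρ ∧ ρ ≤ ε / (2 * ∑ i, B i (x' i))) ∨
          (ε / 2 < (∑ i, f i (x' i)) - flow ∧
            0 < ρ ∧ ρ ≤ ε^2 / (4 * ((∑ i, f i (x' i)) - flow) * ∑ i, B i (x' i)))) :
    (∑ i, f i (xt i)) - (∑ i, f i (xstar i)) ≤ ε := by
  obtain ⟨hlin', hgx'⟩ := hx'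
  obtain ⟨hlinstar, hgstar⟩ := hxstarfeas
  set Fstar := ∑ i, f i (xstar i) with hFstar
  set Fx := ∑ i, f i (x' i) with hFx
  set Bx := ∑ i, B i (x' i) with hBx
  have hρpos : 0 < ρ := by rcases hρ with ⟨_, h, _⟩ | ⟨_, h, _⟩ <;> exact h
  -- B nonneg at strictly feasible points
  have hBnn : ∀ (z : (i : Fin n) → EuclideanSpace ℝ (Fin (d i))),
      (∀ i j, g i j (z i) < 0) → 0 ≤ ∑ i, B i (z i) := by
    intro z hz
    apply Finset.sum_nonneg
    intro i _
    rw [hB]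
    apply Finset.sum_nonneg
    intro j _
    have := hz i j
    have : (g i j (z i))⁻¹ < 0 := inv_lt_zero.mpr this
    linarith
  have hBxnn : 0 ≤ Bx := hBnn x' hgx'
  have hBtnn : 0 ≤ ∑ i, B i (xt i) := hBnn xt hxtfeas.2
  -- key bound
  have key : ∀ θ : ℝ, 0 < θ → θ ≤ 1 →
      (∑ i, f i (xt i)) - Fstar ≤ θ * (Fx - flow) + ρ * θ⁻¹ * Bx := by
    intro θ hθ0 hθ1
    set y : (i : Fin n) → EuclideanSpace ℝ (Fin (d i)) :=
      fun i => θ • x' i + (1 - θ) • xstar i with hy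
    have hθ1' : 0 ≤ 1 - θ := by linarith
    have hylin : (∑ i, (A i).mulVec (y i)) = c := by
      have : ∀ i ∈ Finset.univ, (A i).mulVec (y i)
          = θ • (A i).mulVec (x' i) + (1 - θ) • (A i).mulVec (xstar i) := by
        intro i _
        ext k
        simp [hy, Matrix.mulVec, dotProduct, PiLp.smul_apply, PiLp.add_apply,
          mul_add, Finset.sum_add_distrib, Finset.mul_sum, mul_left_comm]
      rw [Finset.sum_congr rfl this, Finset.sum_add_distrib,
        ← Finset.smul_sum, ← Finset.smul_sum, hlin', hlinstar, ← add_smul]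
      simp
    have hgy : ∀ i j, g i j (y i) ≤ θ * g i j (x' i) := by
      intro i j
      have h1 := (hgconv i j).2 (Set.mem_univ (x' i)) (Set.mem_univ (xstar i))
        hθ0.le hθ1' (by ring)
      have h2 : (1 - θ) * g i j (xstar i) ≤ 0 :=
        mul_nonpos_of_nonneg_of_nonpos hθ1' (hgstar i j)
      calc g i j (y i) ≤ θ * g i j (x' i) + (1 - θ) * g i j (xstar i) := h1
        _ ≤ θ * g i j (x' i) := by linarith
    have hgyneg : ∀ i j, g i j (y i) < 0 := by
      intro i j
      exact lt_of_le_of_lt (hgy i j) (mul_neg_of_pos_of_neg hθ0 (hgx' i j))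
    have hBy : ∀ i, B i (y i) ≤ θ⁻¹ * B i (x' i) := by
      intro i
      rw [hB, hB, Finset.mul_sum]
      apply Finset.sum_le_sum
      intro j _
      have hb : θ * g i j (x' i) < 0 := mul_neg_of_pos_of_neg hθ0 (hgx' i j)
      have ha : g i j (y i) < 0 := hgyneg i j
      have hinv : (θ * g i j (x' i))⁻¹ ≤ (g i j (y i))⁻¹ :=
        (inv_le_inv_of_neg hb ha).mpr (hgy i j)
      have : -(g i j (y i))⁻¹ ≤ -((θ * g i j (x' i))⁻¹) := by linarith
      calc -(g i j (y i))⁻¹ ≤ -((θ * g i j (x' i))⁻¹) := this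
        _ = θ⁻¹ * -(g i j (x' i))⁻¹ := by rw [mul_inv]; ring
    have hfy : ∑ i, f i (y i) ≤ θ * Fx + (1 - θ) * Fstar := by
      rw [hFx, hFstar, Finset.mul_sum, Finset.mul_sum, ← Finset.sum_add_distrib]
      apply Finset.sum_le_sum
      intro i _
      exact (hfconv i).2 (Set.mem_univ (x' i)) (Set.mem_univ (xstar i))
        hθ0.le hθ1' (by ring)
    have hopt := hxtopt y ⟨hylin, hgyneg⟩
    rw [Finset.sum_add_distrib, Finset.sum_add_distrib, ← Finset.mul_sum,
      ← Finset.mul_sum] at hopt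
    have hByS : ∑ i, B i (y i) ≤ θ⁻¹ * Bx := by
      rw [hBx, Finset.mul_sum]
      exact Finset.sum_le_sum fun i _ => hBy i
    have hρBt : 0 ≤ ρ * ∑ i, B i (xt i) := mul_nonneg hρpos.le hBtnn
    have hρBy : ρ * ∑ i, B i (y i) ≤ ρ * (θ⁻¹ * Bx) :=
      mul_le_mul_of_nonneg_left hByS hρpos.le
    have hmono : θ * (Fx - Fstar) ≤ θ * (Fx - flow) :=
      mul_le_mul_of_nonneg_left (by linarith) hθ0.le
    nlinarith [hopt, hfy, hρBt, hρBy, hmono]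
  -- case analysis
  rcases hρ with ⟨h1, h2, h3⟩ | ⟨h1, h2, h3⟩
  · -- case (i): θ = 1
    rcases eq_or_lt_of_le hBxnn with hB0 | hBpos
    · exfalso
      rw [← hB0] at h3
      norm_num at h3
      linarith
    · have hρB : ρ * Bx ≤ ε / 2 := by
        rw [le_div_iff₀ (by positivity)] at h3
        nlinarith
      have := key 1 one_pos le_rfl
      simp at this
      linarith
  · -- case (ii): θ = ε / (2 * (Fx - flow))
    have hD : 0 < Fx - flow := by linarith
    rcases eq_or_lt_of_le hBxnn with hB0 | hBpos
    · exfalso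
      rw [← hB0] at h3
      norm_num at h3
      linarith
    · set θ := ε / (2 * (Fx - flow)) with hθ
      have hθ0 : 0 < θ := by positivity
      have hθ1 : θ ≤ 1 := by
        rw [hθ, div_le_one (by positivity)]
        linarith
      have hkey := key θ hθ0 hθ1
      have hθD : θ * (Fx - flow) = ε / 2 := by
        rw [hθ]; field_simp
      have hθinv : θ⁻¹ = 2 * (Fx - flow) / ε := by
        rw [hθ]; field_simp
      have hρB : ρ * θ⁻¹ * Bx ≤ ε / 2 := by
        rw [hθinv]
        rw [le_div_iff₀ (by positivity)] at h3
        have h4 : ρ * (2 * (Fx - flow) / ε) * Bx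
            = ρ * (4 * (Fx - flow) * Bx) / (2 * ε) := by ring
        rw [h4, div_le_div_iff₀ (by positivity) (by positivity)]
        nlinarith
      linarith
end

section
/- Let g : ℝ^d → ℝ be convex and β-smooth, and β₁-Lipschitz continuous on {z : g(z) ≤ 0}. Let M > 0 and let x, y ∈ ℝ^d satisfy g(x) < 0, g(y) < 0, B(x) ≤ M, and B(y) ≤ M, where B(z) := −1/g(z). Then B(y) − B(x) − ⟨∇B(x), y − x⟩ ≥ ‖∇B(y) − ∇B(x)‖² / (8β₁²M³ + 4βM²). -/
open RealInnerProductSpace Set Topology Filter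

section Aux

variable {E : Type*} [NormedAddCommGroup E] [InnerProductSpace ℝ E] [CompleteSpace E]

lemma aux_fderiv_inner (g : E → ℝ) (p v : E) : fderiv ℝ g p v = ⟪gradient g p, v⟫ := by
  rw [gradient, ← InnerProductSpace.toDual_apply_apply, LinearIsometryEquiv.apply_symm_apply]

lemma aux_line_hasDerivAt (g : E → ℝ) (hdiff : Differentiable ℝ g) (u v : E) (t : ℝ) :
    HasDerivAt (fun s : ℝ => g (u + s • v)) ⟪gradient g (u + t • v), v⟫ t := by
  have hpath : HasDerivAt (fun s : ℝ => u + s • v) v t := by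
    simpa using (((hasDerivAt_id t).smul_const v).const_add u)
  have H : HasDerivAt (g ∘ fun s : ℝ => u + s • v) (fderiv ℝ g (u + t • v) v) t :=
    HasFDerivAt.comp_hasDerivAt (f := fun s : ℝ => u + s • v)
      t ((hdiff (u + t • v)).hasFDerivAt) hpath
  rw [aux_fderiv_inner] at H
  exact H

lemma aux_grad_norm_le (g : E → ℝ) (hdiff : Differentiable ℝ g) (β₁ : ℝ) (hβ₁ : 0 ≤ β₁)
    (hlip : ∀ z w : E, g z ≤ 0 → g w ≤ 0 → |g z - g w| ≤ β₁ * ‖z - w‖)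
    (z : E) (hz : g z < 0) : ‖gradient g z‖ ≤ β₁ := by
  set v := gradient g z with hv
  by_cases h0 : v = 0
  · simp [h0, hβ₁]
  have hd : HasDerivAt (fun s : ℝ => g (z + s • v)) ⟪v, v⟫ 0 := by
    convert aux_line_hasDerivAt g hdiff z v 0 using 2
    rw [zero_smul, add_zero]
  have hcont : ContinuousAt (fun s : ℝ => g (z + s • v)) 0 :=
    (hd.differentiableAt.continuousAt)
  have hev : ∀ᶠ s in 𝓝 (0 : ℝ), g (z + s • v) < 0 := by
    have h0' : g (z + (0:ℝ) • v) < 0 := by simpa using hz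
    exact hcont.eventually_lt_const h0'
  have hlim : Filter.Tendsto (slope (fun s : ℝ => g (z + s • v)) 0) (𝓝[>] 0) (𝓝 ⟪v, v⟫) :=
    (hasDerivAt_iff_tendsto_slope.1 hd).mono_left
      (nhdsWithin_mono _ fun s hs => ne_of_gt hs)
  have hslope : ∀ᶠ s in 𝓝[>] (0 : ℝ), slope (fun s : ℝ => g (z + s • v)) 0 s ≤ β₁ * ‖v‖ := by
    filter_upwards [self_mem_nhdsWithin, hev.filter_mono nhdsWithin_le_nhds] with s hs hneg
    have hs' : (0:ℝ) < s := hs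
    have hl := hlip (z + s • v) z hneg.le hz.le
    have hnorm : ‖(z + s • v) - z‖ = s * ‖v‖ := by
      simp [norm_smul, abs_of_pos hs']
    rw [hnorm] at hl
    have : g (z + s • v) - g z ≤ β₁ * (s * ‖v‖) := (abs_le.1 hl).2
    have hsl : slope (fun s : ℝ => g (z + s • v)) 0 s
        = s⁻¹ * (g (z + s • v) - g z) := by
      simp [slope]
    have h2 := mul_le_mul_of_nonneg_left this (le_of_lt (inv_pos.2 hs'))
    have h3 : s⁻¹ * (β₁ * (s * ‖v‖)) = β₁ * ‖v‖ := by field_simp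
    rw [hsl]
    linarith
  have hVV : ⟪v, v⟫ ≤ β₁ * ‖v‖ := le_of_tendsto hlim hslope
  rw [real_inner_self_eq_norm_mul_norm] at hVV
  have hvpos : 0 < ‖v‖ := norm_pos_iff.2 h0
  nlinarith

lemma aux_hasGradient_B (g : E → ℝ) (hdiff : Differentiable ℝ g)
    (B : E → ℝ) (hB : ∀ z, B z = -(g z)⁻¹) (z : E) (hz : g z ≠ 0) :
    HasGradientAt B (((g z) ^ 2)⁻¹ • gradient g z) z := by
  have h1 : HasDerivAt (fun r : ℝ => -r⁻¹) (((g z) ^ 2)⁻¹) (g z) := by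
    have h := (hasDerivAt_inv hz).neg
    simp only [neg_neg] at h
    exact h
  have h2 : HasFDerivAt (fun w => -(g w)⁻¹) (((g z) ^ 2)⁻¹ • fderiv ℝ g z) z := by
    exact h1.comp_hasFDerivAt z (hdiff z).hasFDerivAt
  have hBfun : B = fun w => -(g w)⁻¹ := funext hB
  rw [hBfun]
  rw [hasGradientAt_iff_hasFDerivAt]
  convert h2 using 1
  · rfl
  rw [gradient, map_smul]
  simp [LinearIsometryEquiv.apply_symm_apply]

lemma aux_gradient_B (g : E → ℝ) (hdiff : Differentiable ℝ g)
    (B : E → ℝ) (hB : ∀ z, B z = -(g z)⁻¹) (z : E) (hz : g z ≠ 0) :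
    gradient B z = ((g z) ^ 2)⁻¹ • gradient g z :=
  (aux_hasGradient_B g hdiff B hB z hz).gradient

lemma aux_inner_grad_le (g : E → ℝ) (hconv : ConvexOn ℝ Set.univ g)
    (hdiff : Differentiable ℝ g) (w z : E) :
    ⟪gradient g w, z - w⟫ ≤ g z - g w := by
  have hφ : ConvexOn ℝ Set.univ (fun s : ℝ => g (w + s • (z - w))) := by
    have := hconv.comp_affineMap (AffineMap.lineMap w z)
    convert this.subset (subset_preimage_univ) (convex_univ) using 2 with s
    case e'_12 =>
      rw [Function.comp_apply, AffineMap.lineMap_apply, vsub_eq_sub, vadd_eq_add]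
      rw [add_comm]
    all_goals rfl
  have hd : HasDerivAt (fun s : ℝ => g (w + s • (z - w))) ⟪gradient g w, z - w⟫ 0 := by
    simpa using aux_line_hasDerivAt g hdiff w (z - w) 0
  have := hφ.le_slope_of_hasDerivAt (mem_univ (0:ℝ)) (mem_univ (1:ℝ)) one_pos hd
  have hslope : slope (fun s : ℝ => g (w + s • (z - w))) 0 1
      = g z - g w := by
    simp [slope]
  rw [hslope] at this
  exact this

lemma aux_bregman (g : E → ℝ) (hconv : ConvexOn ℝ Set.univ g)
    (hdiff : Differentiable ℝ g)
    (B : E → ℝ) (hB : ∀ z, B z = -(g z)⁻¹) (w z : E) (hw : g w < 0) (hz : g z < 0) :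
    0 ≤ B z - B w - ⟪gradient B w, z - w⟫ := by
  have hgrad := aux_gradient_B g hdiff B hB w hw.ne
  have hinner := aux_inner_grad_le g hconv hdiff w z
  rw [hgrad, real_inner_smul_left]
  rw [hB z, hB w]
  set a := g z with ha'; set b := g w with hb'
  have ha0 : a ≠ 0 := ne_of_lt hz
  have hb0 : b ≠ 0 := ne_of_lt hw
  have hb2 : (0:ℝ) < b ^ 2 := by positivity
  have h1 : ((b:ℝ) ^ 2)⁻¹ * ⟪gradient g w, z - w⟫ ≤ (b ^ 2)⁻¹ * (a - b) := by
    apply mul_le_mul_of_nonneg_left hinner (by positivity)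
  have key : -(a)⁻¹ + b⁻¹ - (b ^ 2)⁻¹ * (a - b) = (a - b) ^ 2 / ((-a) * b ^ 2) := by
    field_simp
    ring
  have hpos : (0:ℝ) ≤ (a - b) ^ 2 / ((-a) * b ^ 2) :=
    div_nonneg (sq_nonneg _) (le_of_lt (mul_pos (neg_pos.2 hz) hb2))
  linarith [key ▸ hpos]


lemma aux_le_neg_inv {a M : ℝ} (hM : 0 < M) (ha : a < 0) (hle : -a⁻¹ ≤ M) : a ≤ -M⁻¹ := by
  have h1 : a⁻¹ < 0 := inv_lt_zero.2 ha
  have h4 : 0 < -a⁻¹ := by linarith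
  have h5 := inv_anti₀ h4 hle
  rw [inv_neg, inv_inv] at h5
  linarith

lemma aux_inv_bounds {a c : ℝ} (hc : 0 < c) (ha : a ≤ -c) :
    (-a)⁻¹ ≤ c⁻¹ ∧ (a ^ 2)⁻¹ ≤ (c ^ 2)⁻¹ := by
  have h1 : c ≤ -a := by linarith
  have h2 : (0:ℝ) < -a := lt_of_lt_of_le hc h1
  refine ⟨inv_anti₀ hc h1, ?_⟩
  have h3 : c ^ 2 ≤ a ^ 2 := by nlinarith
  exact inv_anti₀ (by positivity) h3

lemma aux_inv_sq_diff {a b : ℝ} (ha : a < 0) (hb : b < 0) :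
    |(a ^ 2)⁻¹ - (b ^ 2)⁻¹|
      ≤ |b - a| * ((-a)⁻¹ * (b ^ 2)⁻¹ + (a ^ 2)⁻¹ * (-b)⁻¹) := by
  have ha0 : a ≠ 0 := ha.ne
  have hb0 : b ≠ 0 := hb.ne
  have key : (a ^ 2)⁻¹ - (b ^ 2)⁻¹
      = (a - b) * ((-a)⁻¹ * (b ^ 2)⁻¹ + (a ^ 2)⁻¹ * (-b)⁻¹) := by
    rw [inv_neg, inv_neg]
    field_simp
    ring
  rw [key, abs_mul, abs_sub_comm]
  have hpos : 0 ≤ (-a)⁻¹ * (b ^ 2)⁻¹ + (a ^ 2)⁻¹ * (-b)⁻¹ := by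
    have : (0:ℝ) < -a := by linarith
    have : (0:ℝ) < -b := by linarith
    positivity
  rw [abs_of_nonneg hpos]

lemma arith_nonneg_of_le {β₁ c n : ℝ} (h : c ≤ β₁ * n) (hc : 0 ≤ c) (hn : 0 < n) : 0 ≤ β₁ := by
  nlinarith

lemma arith_pos_of_lt {β₁ M δ : ℝ} (h : δ ≤ 2 * β₁ * M ^ 2) (hδ : 0 < δ) (hM : 0 < M) :
    0 < β₁ := by nlinarith [sq_nonneg M]

lemma arith_At {β β₁ M : ℝ} (hβ : 0 ≤ β) (hM : 0 < M) (hK : 0 < 2 * β₁ ^ 2 * M + β) :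
    β₁ ^ 2 * M ^ 2 * (2 / (5 * (M ^ 2 * (2 * β₁ ^ 2 * M + β)))) ≤ M⁻¹ / 5 := by
  rw [show M⁻¹ / 5 = 1 / (5 * M) by rw [inv_eq_one_div]; ring]
  rw [show β₁ ^ 2 * M ^ 2 * (2 / (5 * (M ^ 2 * (2 * β₁ ^ 2 * M + β))))
      = (2 * β₁ ^ 2 * M ^ 2) / (5 * (M ^ 2 * (2 * β₁ ^ 2 * M + β))) by ring]
  rw [div_le_div_iff₀ (by positivity) (by positivity)]
  nlinarith [mul_nonneg hβ (sq_nonneg M)]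

lemma arith_Bt {β β₁ M δ : ℝ} (hβ : 0 ≤ β) (hM : 0 < M) (hK : 0 < 2 * β₁ ^ 2 * M + β)
    (hδ : δ ^ 2 ≤ 4 * β₁ ^ 2 * M ^ 4) (hδ0 : 0 ≤ δ ^ 2) :
    β * δ ^ 2 / 2 * (2 / (5 * (M ^ 2 * (2 * β₁ ^ 2 * M + β)))) ^ 2 ≤ M⁻¹ / 25 := by
  have h1 : β * δ ^ 2 / 2 * (2 / (5 * (M ^ 2 * (2 * β₁ ^ 2 * M + β)))) ^ 2
      ≤ 2 * β * β₁ ^ 2 * M ^ 4 * (2 / (5 * (M ^ 2 * (2 * β₁ ^ 2 * M + β)))) ^ 2 := by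
    have hsq : (0:ℝ) ≤ (2 / (5 * (M ^ 2 * (2 * β₁ ^ 2 * M + β)))) ^ 2 := sq_nonneg _
    nlinarith [mul_le_mul_of_nonneg_left hδ hβ]
  have h2 : 2 * β * β₁ ^ 2 * M ^ 4 * (2 / (5 * (M ^ 2 * (2 * β₁ ^ 2 * M + β)))) ^ 2
      ≤ M⁻¹ / 25 := by
    rw [show M⁻¹ / 25 = 1 / (25 * M) by rw [inv_eq_one_div]; ring]
    rw [div_pow, show (2:ℝ) ^ 2 = 4 by norm_num]
    rw [show 2 * β * β₁ ^ 2 * M ^ 4 * (4 / (5 * (M ^ 2 * (2 * β₁ ^ 2 * M + β))) ^ 2)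
        = (8 * β * β₁ ^ 2 * M ^ 4) / (5 * (M ^ 2 * (2 * β₁ ^ 2 * M + β))) ^ 2 by ring]
    rw [div_le_div_iff₀ (by positivity) (by positivity)]
    nlinarith [mul_nonneg (pow_nonneg hM.le 4) (sq_nonneg (2 * β₁ ^ 2 * M - β))]
  linarith

lemma arith_step {β β₁ M : ℝ} (hβ : 0 ≤ β) (hβ₁ : 0 ≤ β₁) (hM : 0 < M)
    (hK : 0 < 2 * β₁ ^ 2 * M + β) :
    1 / (4 * (M ^ 2 * (2 * β₁ ^ 2 * M + β)))
      ≤ 2 / (5 * (M ^ 2 * (2 * β₁ ^ 2 * M + β)))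
        - (625 * β * M ^ 2 + 1100 * β₁ ^ 2 * M ^ 3) / 361
          * (2 / (5 * (M ^ 2 * (2 * β₁ ^ 2 * M + β)))) ^ 2 / 2 := by
  have hE : (0:ℝ) < M ^ 2 * (2 * β₁ ^ 2 * M + β) := by positivity
  have h8C : 8 * ((625 * β * M ^ 2 + 1100 * β₁ ^ 2 * M ^ 3) / 361)
      ≤ 15 * (M ^ 2 * (2 * β₁ ^ 2 * M + β)) := by
    nlinarith [mul_nonneg hβ (sq_nonneg M),
      mul_nonneg (mul_nonneg hβ₁ hβ₁) (pow_nonneg hM.le 3)]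
  have hiden : 2 / (5 * (M ^ 2 * (2 * β₁ ^ 2 * M + β)))
        - (625 * β * M ^ 2 + 1100 * β₁ ^ 2 * M ^ 3) / 361
          * (2 / (5 * (M ^ 2 * (2 * β₁ ^ 2 * M + β)))) ^ 2 / 2
        - 1 / (4 * (M ^ 2 * (2 * β₁ ^ 2 * M + β)))
      = (15 * (M ^ 2 * (2 * β₁ ^ 2 * M + β))
          - 8 * ((625 * β * M ^ 2 + 1100 * β₁ ^ 2 * M ^ 3) / 361))
        / (100 * (M ^ 2 * (2 * β₁ ^ 2 * M + β)) ^ 2) := by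
    field_simp
    ring
  have hnn : 0 ≤ (15 * (M ^ 2 * (2 * β₁ ^ 2 * M + β))
      - 8 * ((625 * β * M ^ 2 + 1100 * β₁ ^ 2 * M ^ 3) / 361))
      / (100 * (M ^ 2 * (2 * β₁ ^ 2 * M + β)) ^ 2) :=
    div_nonneg (by linarith) (by positivity)
  linarith

end Aux

set_option maxHeartbeats 2000000 in
/-- Lemma 3, local smoothness of the inverse barrier.
`g` convex and `β`-smooth on `ℝ^d`, `β₁`-Lipschitz on `{z : g z ≤ 0}`; `M > 0`;
`x, y` with `g x < 0`, `g y < 0`, `B x ≤ M`, `B y ≤ M`, where `B z = −1/g z`.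
Then `B y − B x − ⟪∇B x, y − x⟫ ≥ ‖∇B y − ∇B x‖² / (8 β₁² M³ + 4 β M²)`. -/
theorem stmt_12 (dd : ℕ) (g : EuclideanSpace ℝ (Fin dd) → ℝ)
    (hconv : ConvexOn ℝ Set.univ g) (hdiff : Differentiable ℝ g)
    (β β₁ : ℝ)
    (hsmooth : ∀ z w : EuclideanSpace ℝ (Fin dd),
      ‖gradient g z - gradient g w‖ ≤ β * ‖z - w‖)
    (hlip : ∀ z w : EuclideanSpace ℝ (Fin dd),
      g z ≤ 0 → g w ≤ 0 → |g z - g w| ≤ β₁ * ‖z - w‖)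
    (M : ℝ) (hM : 0 < M)
    (x y : EuclideanSpace ℝ (Fin dd)) (hx : g x < 0) (hy : g y < 0)
    (B : EuclideanSpace ℝ (Fin dd) → ℝ) (hB : ∀ z, B z = -(g z)⁻¹)
    (hBx : B x ≤ M) (hBy : B y ≤ M) :
    ‖gradient B y - gradient B x‖^2 / (8 * β₁^2 * M^3 + 4 * β * M^2) ≤
      B y - B x - ⟪gradient B x, y - x⟫ := by
  by_cases hxy : x = y
  · subst hxy
    simp
  have hnxy : 0 < ‖x - y‖ := by
    rw [norm_pos_iff]; exact sub_ne_zero.2 hxy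
  have hβ₁ : 0 ≤ β₁ :=
    arith_nonneg_of_le (hlip x y hx.le hy.le) (abs_nonneg _) hnxy
  have hβ : 0 ≤ β :=
    arith_nonneg_of_le (hsmooth x y) (norm_nonneg _) hnxy
  have hMinv : 0 < M⁻¹ := inv_pos.2 hM
  -- region facts
  have hBx' : -(g x)⁻¹ ≤ M := by rw [← hB x]; exact hBx
  have hBy' : -(g y)⁻¹ ≤ M := by rw [← hB y]; exact hBy
  have hgx1 : g x ≤ -M⁻¹ := aux_le_neg_inv hM hx hBx'
  have hgy1 : g y ≤ -M⁻¹ := aux_le_neg_inv hM hy hBy'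
  have hgx2 : ((g x) ^ 2)⁻¹ ≤ M ^ 2 := by
    have h := (aux_inv_bounds hMinv hgx1).2
    rwa [inv_pow, inv_inv] at h
  have hgy2 : ((g y) ^ 2)⁻¹ ≤ M ^ 2 := by
    have h := (aux_inv_bounds hMinv hgy1).2
    rwa [inv_pow, inv_inv] at h
  have hGx : ‖gradient g x‖ ≤ β₁ := aux_grad_norm_le g hdiff β₁ hβ₁ hlip x hx
  have hGy : ‖gradient g y‖ ≤ β₁ := aux_grad_norm_le g hdiff β₁ hβ₁ hlip y hy
  have hgBx : gradient B x = ((g x) ^ 2)⁻¹ • gradient g x :=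
    aux_gradient_B g hdiff B hB x hx.ne
  have hgBy : gradient B y = ((g y) ^ 2)⁻¹ • gradient g y :=
    aux_gradient_B g hdiff B hB y hy.ne
  set v : EuclideanSpace ℝ (Fin dd) := gradient B x - gradient B y with hv
  have hnv : ‖gradient B y - gradient B x‖ = ‖v‖ := by rw [hv, norm_sub_rev]
  set δ : ℝ := ‖v‖ with hδdef
  have hnBx : ‖gradient B x‖ ≤ β₁ * M ^ 2 := by
    rw [hgBx, norm_smul, Real.norm_eq_abs, abs_of_nonneg (by positivity)]
    calc ((g x) ^ 2)⁻¹ * ‖gradient g x‖ ≤ M ^ 2 * β₁ :=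
          mul_le_mul hgx2 hGx (norm_nonneg _) (by positivity)
      _ = β₁ * M ^ 2 := by ring
  have hnBy : ‖gradient B y‖ ≤ β₁ * M ^ 2 := by
    rw [hgBy, norm_smul, Real.norm_eq_abs, abs_of_nonneg (by positivity)]
    calc ((g y) ^ 2)⁻¹ * ‖gradient g y‖ ≤ M ^ 2 * β₁ :=
          mul_le_mul hgy2 hGy (norm_nonneg _) (by positivity)
      _ = β₁ * M ^ 2 := by ring
  have hδle : δ ≤ 2 * β₁ * M ^ 2 := by
    calc δ ≤ ‖gradient B x‖ + ‖gradient B y‖ := norm_sub_le _ _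
      _ ≤ 2 * β₁ * M ^ 2 := by linarith
  by_cases hv0 : v = 0
  · have hzero : gradient B y - gradient B x = 0 := by
      have : gradient B x = gradient B y := by
        have := sub_eq_zero.1 hv0; exact this
      rw [this, sub_self]
    rw [hzero]
    have h0 : ‖(0 : EuclideanSpace ℝ (Fin dd))‖ ^ 2 / (8 * β₁^2 * M^3 + 4 * β * M^2) = 0 := by
      simp
    rw [h0]
    exact aux_bregman g hconv hdiff B hB x y hx hy
  have hδpos : 0 < δ := norm_pos_iff.2 hv0
  have hβ₁pos : 0 < β₁ := arith_pos_of_lt hδle hδpos hM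
  set E' : ℝ := M ^ 2 * (2 * β₁ ^ 2 * M + β) with hE'
  have hK : 0 < 2 * β₁ ^ 2 * M + β := by
    have := mul_pos (pow_pos hβ₁pos 2) hM
    linarith
  have hE'pos : 0 < E' := by
    rw [hE']
    exact mul_pos (by positivity) hK
  set t : ℝ := 2 / (5 * E') with ht
  have htpos : 0 < t := by positivity
  -- first order bound at y
  have hkey : ⟪gradient g y, v⟫ ≤ β₁ ^ 2 * M ^ 2 := by
    rw [hv, hgBx, hgBy, inner_sub_right, real_inner_smul_right, real_inner_smul_right]
    have h1 : (⟪gradient g y, gradient g x⟫ : ℝ) ≤ β₁ * β₁ :=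
      le_trans (real_inner_le_norm _ _) (mul_le_mul hGy hGx (norm_nonneg _) hβ₁)
    have h2 : (0:ℝ) ≤ ⟪gradient g y, gradient g y⟫ := real_inner_self_nonneg
    have h3 : (0:ℝ) ≤ ((g y) ^ 2)⁻¹ := by positivity
    have h4 : (0:ℝ) ≤ ((g x) ^ 2)⁻¹ := by positivity
    set I1 : ℝ := ⟪gradient g y, gradient g x⟫ with hI1
    set I2 : ℝ := ⟪gradient g y, gradient g y⟫ with hI2
    have h5 : ((g x) ^ 2)⁻¹ * I1 ≤ M ^ 2 * (β₁ * β₁) := by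
      rcases le_total I1 0 with hI | hI
      · have hn1 : ((g x) ^ 2)⁻¹ * I1 ≤ 0 := mul_nonpos_of_nonneg_of_nonpos h4 hI
        have hn2 : (0:ℝ) ≤ M ^ 2 * (β₁ * β₁) := by positivity
        linarith
      · calc ((g x) ^ 2)⁻¹ * I1
            ≤ M ^ 2 * I1 := mul_le_mul_of_nonneg_right hgx2 hI
          _ ≤ M ^ 2 * (β₁ * β₁) := mul_le_mul_of_nonneg_left h1 (by positivity)
    have h6 : (0:ℝ) ≤ ((g y) ^ 2)⁻¹ * I2 := mul_nonneg h3 h2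
    linarith [h5, h6]
  -- derivative bound for g along the path
  have hpathg : ∀ s : ℝ, 0 ≤ s →
      ⟪gradient g (y + s • v), v⟫ ≤ β₁ ^ 2 * M ^ 2 + β * δ ^ 2 * s := by
    intro s hs
    have hn : ‖(y + s • v) - y‖ = s * δ := by
      simp [norm_smul, abs_of_nonneg hs, hδdef]
    have h6 : ⟪gradient g (y + s • v) - gradient g y, v⟫ ≤ β * (s * δ) * δ := by
      calc ⟪gradient g (y + s • v) - gradient g y, v⟫
          ≤ ‖gradient g (y + s • v) - gradient g y‖ * ‖v‖ := real_inner_le_norm _ _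
        _ ≤ (β * ‖(y + s • v) - y‖) * δ :=
            mul_le_mul_of_nonneg_right (hsmooth _ y) (norm_nonneg v)
        _ = β * (s * δ) * δ := by rw [hn]
    rw [inner_sub_left] at h6
    have e : β * (s * δ) * δ = β * δ ^ 2 * s := by ring
    linarith [hkey]
  -- g bound along the path
  have hgpath : ∀ s ∈ Icc (0:ℝ) t,
      g (y + s • v) ≤ g y + β₁ ^ 2 * M ^ 2 * s + β * δ ^ 2 / 2 * s ^ 2 := by
    have hf1d : ∀ s : ℝ, HasDerivAt
        (fun s : ℝ => g (y + s • v) - (β₁ ^ 2 * M ^ 2 * s + β * δ ^ 2 / 2 * s ^ 2))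
        (⟪gradient g (y + s • v), v⟫ - (β₁ ^ 2 * M ^ 2 + β * δ ^ 2 / 2 * (2 * s))) s := by
      intro s
      have h1 := aux_line_hasDerivAt g hdiff y v s
      have h2 : HasDerivAt (fun s : ℝ => β₁ ^ 2 * M ^ 2 * s + β * δ ^ 2 / 2 * s ^ 2)
          (β₁ ^ 2 * M ^ 2 + β * δ ^ 2 / 2 * (2 * s)) s := by
        have ha := (hasDerivAt_id s).const_mul (β₁ ^ 2 * M ^ 2)
        have hb := (hasDerivAt_pow 2 s).const_mul (β * δ ^ 2 / 2)
        have hab := ha.add hb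
        refine hab.congr_deriv ?_
        simp
      exact h1.sub h2
    have hanti : AntitoneOn
        (fun s : ℝ => g (y + s • v) - (β₁ ^ 2 * M ^ 2 * s + β * δ ^ 2 / 2 * s ^ 2))
        (Icc 0 t) := by
      apply antitoneOn_of_deriv_nonpos (convex_Icc 0 t)
      · exact fun s _ => ((hf1d s).continuousAt).continuousWithinAt
      · exact fun s _ => ((hf1d s).differentiableAt).differentiableWithinAt
      · intro s hs
        rw [interior_Icc] at hs
        rw [(hf1d s).deriv]
        have h7 := hpathg s hs.1.le
        have e : β * δ ^ 2 / 2 * (2 * s) = β * δ ^ 2 * s := by ring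
        linarith
    intro s hs
    have h := hanti (left_mem_Icc.2 htpos.le) hs hs.1
    simp only at h
    have h0 : g (y + (0:ℝ) • v) = g y := by simp
    rw [h0] at h
    nlinarith [h]
  -- membership bound
  have hAt : β₁ ^ 2 * M ^ 2 * t ≤ M⁻¹ / 5 := by
    rw [ht, hE']
    exact arith_At hβ hM hK
  have hδsq : δ ^ 2 ≤ 4 * β₁ ^ 2 * M ^ 4 := by
    have h := pow_le_pow_left₀ (norm_nonneg v) hδle 2
    calc δ ^ 2 ≤ (2 * β₁ * M ^ 2) ^ 2 := h
      _ = 4 * β₁ ^ 2 * M ^ 4 := by ring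
  have hBt : β * δ ^ 2 / 2 * t ^ 2 ≤ M⁻¹ / 25 := by
    rw [ht, hE']
    exact arith_Bt hβ hM hK hδsq (sq_nonneg δ)
  have hc19 : ∀ s ∈ Icc (0:ℝ) t, g (y + s • v) ≤ -(19 / 25 * M⁻¹) := by
    intro s hs
    have h := hgpath s hs
    have hA' : β₁ ^ 2 * M ^ 2 * s ≤ β₁ ^ 2 * M ^ 2 * t :=
      mul_le_mul_of_nonneg_left hs.2 (by positivity)
    have hs2 : s ^ 2 ≤ t ^ 2 := pow_le_pow_left₀ hs.1 hs.2 2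
    have hB' : β * δ ^ 2 / 2 * s ^ 2 ≤ β * δ ^ 2 / 2 * t ^ 2 :=
      mul_le_mul_of_nonneg_left hs2 (by positivity)
    linarith
  -- mixed Lipschitz bound for gradient of B
  set C : ℝ := (625 * β * M ^ 2 + 1100 * β₁ ^ 2 * M ^ 3) / 361 with hC
  have hc19pos : 0 < 19 / 25 * M⁻¹ := by positivity
  have hLipB : ∀ u : EuclideanSpace ℝ (Fin dd), g u ≤ -(19 / 25 * M⁻¹) →
      ‖gradient B u - gradient B y‖ ≤ C * ‖u - y‖ := by
    intro u hu
    have hu0 : g u < 0 := lt_of_le_of_lt hu (by linarith)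
    obtain ⟨hua, hub⟩ := aux_inv_bounds hc19pos hu
    have hinvc : ((19:ℝ) / 25 * M⁻¹)⁻¹ = 25 / 19 * M := by
      rw [mul_inv, inv_inv]; norm_num
    have hinvc2 : (((19:ℝ) / 25 * M⁻¹) ^ 2)⁻¹ = 625 / 361 * M ^ 2 := by
      rw [mul_pow, mul_inv, inv_pow, inv_inv]; norm_num
    rw [hinvc] at hua
    rw [hinvc2] at hub
    -- bounds for y level
    obtain ⟨hya, hyb⟩ := aux_inv_bounds hMinv hgy1
    rw [inv_inv] at hya
    rw [inv_pow, inv_inv] at hyb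
    -- decompose
    rw [aux_gradient_B g hdiff B hB u hu0.ne, hgBy]
    have hdecomp : ((g u) ^ 2)⁻¹ • gradient g u - ((g y) ^ 2)⁻¹ • gradient g y
        = ((g u) ^ 2)⁻¹ • (gradient g u - gradient g y)
          + (((g u) ^ 2)⁻¹ - ((g y) ^ 2)⁻¹) • gradient g y := by
      rw [smul_sub, sub_smul]; abel
    rw [hdecomp]
    refine le_trans (norm_add_le _ _) ?_
    rw [norm_smul, norm_smul, Real.norm_eq_abs, Real.norm_eq_abs]
    have hGu : ‖gradient g u - gradient g y‖ ≤ β * ‖u - y‖ := hsmooth u y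
    have habs1 : |((g u) ^ 2)⁻¹| = ((g u) ^ 2)⁻¹ := abs_of_nonneg (by positivity)
    rw [habs1]
    have hlipuy : |g y - g u| ≤ β₁ * ‖u - y‖ := by
      have h := hlip y u hy.le (by linarith)
      rwa [norm_sub_rev] at h
    have habs2 : |((g u) ^ 2)⁻¹ - ((g y) ^ 2)⁻¹|
        ≤ (β₁ * ‖u - y‖) * ((25 / 19 * M) * (M ^ 2) + (625 / 361 * M ^ 2) * M) := by
      refine le_trans (aux_inv_sq_diff hu0 hy) ?_
      have p1 : (0:ℝ) ≤ (-(g u))⁻¹ := by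
        have : (0:ℝ) < -(g u) := by linarith
        positivity
      have p2 : (0:ℝ) ≤ ((g y) ^ 2)⁻¹ := by positivity
      have p3 : (0:ℝ) ≤ ((g u) ^ 2)⁻¹ := by positivity
      have p4 : (0:ℝ) ≤ (-(g y))⁻¹ := by
        have : (0:ℝ) < -(g y) := by linarith
        positivity
      have hsum : (-(g u))⁻¹ * ((g y) ^ 2)⁻¹ + ((g u) ^ 2)⁻¹ * (-(g y))⁻¹
          ≤ (25 / 19 * M) * (M ^ 2) + (625 / 361 * M ^ 2) * M := by
        have q1 : (-(g u))⁻¹ * ((g y) ^ 2)⁻¹ ≤ (25 / 19 * M) * (M ^ 2) :=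
          mul_le_mul hua hyb p2 (by positivity)
        have q2 : ((g u) ^ 2)⁻¹ * (-(g y))⁻¹ ≤ (625 / 361 * M ^ 2) * M :=
          mul_le_mul hub hya p4 (by positivity)
        linarith
      exact mul_le_mul hlipuy hsum
        (add_nonneg (mul_nonneg p1 p2) (mul_nonneg p3 p4)) (by positivity)
    have hterm1 : ((g u) ^ 2)⁻¹ * ‖gradient g u - gradient g y‖
        ≤ (625 / 361 * M ^ 2) * (β * ‖u - y‖) :=
      mul_le_mul hub hGu (norm_nonneg _) (by positivity)
    have hterm2 : |((g u) ^ 2)⁻¹ - ((g y) ^ 2)⁻¹| * ‖gradient g y‖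
        ≤ ((β₁ * ‖u - y‖) * ((25 / 19 * M) * (M ^ 2) + (625 / 361 * M ^ 2) * M)) * β₁ :=
      mul_le_mul habs2 hGy (norm_nonneg _) (by positivity)
    have efin : (625 / 361 * M ^ 2) * (β * ‖u - y‖)
        + ((β₁ * ‖u - y‖) * ((25 / 19 * M) * (M ^ 2) + (625 / 361 * M ^ 2) * M)) * β₁
        = ((625 * β * M ^ 2 + 1100 * β₁ ^ 2 * M ^ 3) / 361) * ‖u - y‖ := by ring
    rw [hC]
    linarith [hterm1, hterm2]
  -- derivative of B along the path
  have hBd : ∀ s ∈ Icc (0:ℝ) t,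
      HasDerivAt (fun s : ℝ => B (y + s • v)) ⟪gradient B (y + s • v), v⟫ s := by
    intro s hs
    have hu : g (y + s • v) < 0 := lt_of_le_of_lt (hc19 s hs) (by linarith)
    have hpath : HasDerivAt (fun s : ℝ => y + s • v) v s := by
      simpa using (((hasDerivAt_id s).smul_const v).const_add y)
    have hgrad := (aux_hasGradient_B g hdiff B hB (y + s • v) hu.ne).hasFDerivAt
    have H := HasFDerivAt.comp_hasDerivAt (f := fun s : ℝ => y + s • v) s hgrad hpath
    have hval : ((InnerProductSpace.toDual ℝ (EuclideanSpace ℝ (Fin dd)))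
        (((g (y + s • v)) ^ 2)⁻¹ • gradient g (y + s • v))) v
        = ⟪gradient B (y + s • v), v⟫ := by
      rw [InnerProductSpace.toDual_apply_apply,
        ← aux_gradient_B g hdiff B hB (y + s • v) hu.ne]
    rw [← hval]
    simp [Function.comp_def] at H ⊢
    exact H
  -- descent along the path for B
  have hBdesc : B (y + t • v) ≤ B y + ⟪gradient B y, v⟫ * t + C * δ ^ 2 / 2 * t ^ 2 := by
    have hf2d : ∀ s ∈ Icc (0:ℝ) t, HasDerivAt
        (fun s : ℝ => B (y + s • v) - (⟪gradient B y, v⟫ * s + C * δ ^ 2 / 2 * s ^ 2))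
        (⟪gradient B (y + s • v), v⟫ - (⟪gradient B y, v⟫ + C * δ ^ 2 / 2 * (2 * s))) s := by
      intro s hs
      have h2 : HasDerivAt (fun s : ℝ => ⟪gradient B y, v⟫ * s + C * δ ^ 2 / 2 * s ^ 2)
          (⟪gradient B y, v⟫ + C * δ ^ 2 / 2 * (2 * s)) s := by
        have ha := (hasDerivAt_id s).const_mul (⟪gradient B y, v⟫ : ℝ)
        have hb := (hasDerivAt_pow 2 s).const_mul (C * δ ^ 2 / 2)
        have hab := ha.add hb
        refine hab.congr_deriv ?_
        simp
      exact (hBd s hs).sub h2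
    have hanti : AntitoneOn
        (fun s : ℝ => B (y + s • v) - (⟪gradient B y, v⟫ * s + C * δ ^ 2 / 2 * s ^ 2))
        (Icc 0 t) := by
      apply antitoneOn_of_deriv_nonpos (convex_Icc 0 t)
      · exact fun s hs => ((hf2d s hs).continuousAt).continuousWithinAt
      · intro s hs
        rw [interior_Icc] at hs
        exact ((hf2d s (Ioo_subset_Icc_self hs)).differentiableAt).differentiableWithinAt
      · intro s hs
        rw [interior_Icc] at hs
        rw [(hf2d s (Ioo_subset_Icc_self hs)).deriv]
        have hs0 : 0 ≤ s := hs.1.le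
        have hmem : s ∈ Icc (0:ℝ) t := Ioo_subset_Icc_self hs
        have hinner : ⟪gradient B (y + s • v) - gradient B y, v⟫ ≤ C * (s * δ) * δ := by
          have hn : ‖(y + s • v) - y‖ = s * δ := by
            simp [norm_smul, abs_of_nonneg hs0, hδdef]
          calc ⟪gradient B (y + s • v) - gradient B y, v⟫
              ≤ ‖gradient B (y + s • v) - gradient B y‖ * ‖v‖ := real_inner_le_norm _ _
            _ ≤ (C * ‖(y + s • v) - y‖) * δ :=
                mul_le_mul_of_nonneg_right (hLipB _ (hc19 s hmem)) (norm_nonneg v)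
            _ = C * (s * δ) * δ := by rw [hn]
        rw [inner_sub_left] at hinner
        have e : C * (s * δ) * δ = C * δ ^ 2 / 2 * (2 * s) := by ring
        linarith
    have h := hanti (left_mem_Icc.2 htpos.le) (right_mem_Icc.2 htpos.le) htpos.le
    simp only at h
    have h0 : B (y + (0:ℝ) • v) = B y := by simp
    rw [h0] at h
    nlinarith [h]
  -- final assembly
  set z : EuclideanSpace ℝ (Fin dd) := y + t • v with hz
  have hgz : g z < 0 := lt_of_le_of_lt (hc19 t (right_mem_Icc.2 htpos.le)) (by linarith)
  have hconvz := aux_bregman g hconv hdiff B hB x z hx hgz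
  have hsplit : ⟪gradient B x, z - x⟫ = ⟪gradient B x, y - x⟫ + t * ⟪gradient B x, v⟫ := by
    have hzx : z - x = (y - x) + t • v := by rw [hz]; abel
    rw [hzx, inner_add_right, real_inner_smul_right]
  have hvv : ⟪gradient B x, v⟫ - ⟪gradient B y, v⟫ = δ ^ 2 := by
    rw [← inner_sub_left, ← hv, hδdef, real_inner_self_eq_norm_sq]
  have hlower : B y - B x - ⟪gradient B x, y - x⟫ ≥ t * δ ^ 2 - C * δ ^ 2 / 2 * t ^ 2 := by
    have h1 : 0 ≤ B z - B x - ⟪gradient B x, z - x⟫ := hconvz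
    have h2 : B z ≤ B y + ⟪gradient B y, v⟫ * t + C * δ ^ 2 / 2 * t ^ 2 := hBdesc
    have hvvt : t * ⟪gradient B x, v⟫ - t * ⟪gradient B y, v⟫ = t * δ ^ 2 := by
      linear_combination t * hvv
    linarith [hsplit, hvvt, h1, h2]
  -- arithmetic for the chosen step size
  have hstep : 1 / (4 * E') ≤ t - C * t ^ 2 / 2 := by
    rw [ht, hE', hC]
    exact arith_step hβ hβ₁ hM hK
  have hden : 8 * β₁ ^ 2 * M ^ 3 + 4 * β * M ^ 2 = 4 * E' := by rw [hE']; ring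
  rw [hnv, hden]
  have hfin1 : δ ^ 2 * (1 / (4 * E')) ≤ δ ^ 2 * (t - C * t ^ 2 / 2) :=
    mul_le_mul_of_nonneg_left hstep (sq_nonneg δ)
  have hfin2 : δ ^ 2 / (4 * E') = δ ^ 2 * (1 / (4 * E')) := by ring
  have efin2 : δ ^ 2 * (t - C * t ^ 2 / 2) = t * δ ^ 2 - C * δ ^ 2 / 2 * t ^ 2 := by ring
  linarith [hfin1, hlower]
end

section
/- Let g : ℝ^d → ℝ be convex and β-smooth with g(x) < 0 and g(y) < 0, and set ḡ := max(|g(x)|, |g(y)|) and Δ := 1/g(x) − 1/g(y) − ⟨∇g(x), y − x⟩/g(x)². Then Δ ≥ ‖∇g(x) − ∇g(y)‖² / (2βḡ²). -/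
open RealInnerProductSpace

private lemma hasDerivAt_line {dd : ℕ} (g : EuclideanSpace ℝ (Fin dd) → ℝ)
    (hdiff : Differentiable ℝ g) (a u : EuclideanSpace ℝ (Fin dd)) (t : ℝ) :
    HasDerivAt (fun s : ℝ => g (a + s • u)) ⟪gradient g (a + t • u), u⟫ t := by
  have h1 : HasDerivAt (fun s : ℝ => a + s • u) u t := by
    simpa using ((hasDerivAt_id t).smul_const u).const_add a
  have h2 : HasFDerivAt g ((InnerProductSpace.toDual ℝ _) (gradient g (a + t • u)))
      (a + t • u) := hasGradientAt_iff_hasFDerivAt.1 (hdiff _).hasGradientAt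
  exact h2.comp_hasDerivAt t h1

private lemma grad_ineq {dd : ℕ} (g : EuclideanSpace ℝ (Fin dd) → ℝ)
    (hconv : ConvexOn ℝ Set.univ g) (hdiff : Differentiable ℝ g)
    (a b : EuclideanSpace ℝ (Fin dd)) :
    g a + ⟪gradient g a, b - a⟫ ≤ g b := by
  set u := b - a with hu
  have hcomp : ConvexOn ℝ Set.univ (fun s : ℝ => g (a + s • u)) := by
    have h := hconv.comp_affineMap (AffineMap.lineMap a b)
    have he : (fun s : ℝ => g (a + s • u)) = (g ∘ (AffineMap.lineMap a b : ℝ →ᵃ[ℝ] _)) := by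
      funext s
      simp [AffineMap.lineMap_apply, hu, add_comm]
    rw [he]
    simpa using h
  have hder : HasDerivAt (fun s : ℝ => g (a + s • u)) ⟪gradient g a, u⟫ 0 := by
    simpa using hasDerivAt_line g hdiff a u 0
  have hs := hcomp.le_slope_of_hasDerivAt (Set.mem_univ 0) (Set.mem_univ 1) zero_lt_one hder
  have h0 : a + (0 : ℝ) • u = a := by simp
  have h1 : a + (1 : ℝ) • u = b := by simp [hu]
  rw [slope_def_field] at hs
  simp only [h0, h1] at hs
  have : ⟪gradient g a, u⟫ ≤ g b - g a := by
    have := hs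
    field_simp at this
    linarith
  linarith

private lemma descent {dd : ℕ} (g : EuclideanSpace ℝ (Fin dd) → ℝ)
    (hdiff : Differentiable ℝ g) (β : ℝ)
    (hsmooth : ∀ z w : EuclideanSpace ℝ (Fin dd),
      ‖gradient g z - gradient g w‖ ≤ β * ‖z - w‖)
    (a b : EuclideanSpace ℝ (Fin dd)) :
    g b ≤ g a + ⟪gradient g a, b - a⟫ + β / 2 * ‖b - a‖ ^ 2 := by
  set u := b - a with hu
  set f : ℝ → ℝ := fun s => β / 2 * ‖u‖ ^ 2 * s ^ 2 - g (a + s • u) with hf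
  have hfder : ∀ t : ℝ,
      HasDerivAt f (β * ‖u‖ ^ 2 * t - ⟪gradient g (a + t • u), u⟫) t := by
    intro t
    have h1 : HasDerivAt (fun s : ℝ => β / 2 * ‖u‖ ^ 2 * s ^ 2) (β * ‖u‖ ^ 2 * t) t := by
      have := (hasDerivAt_pow 2 t).const_mul (β / 2 * ‖u‖ ^ 2)
      refine this.congr_deriv ?_
      ring
    exact h1.sub (hasDerivAt_line g hdiff a u t)
  have hfdiff : Differentiable ℝ f := fun t => (hfder t).differentiableAt
  have hmono : Monotone (deriv f) := by
    have hd : deriv f = fun t : ℝ => β * ‖u‖ ^ 2 * t - ⟪gradient g (a + t • u), u⟫ :=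
      funext fun t => (hfder t).deriv
    rw [hd]
    intro s t hst
    have key : ⟪gradient g (a + t • u) - gradient g (a + s • u), u⟫
        ≤ β * (t - s) * ‖u‖ ^ 2 := by
      have h1 := real_inner_le_norm (gradient g (a + t • u) - gradient g (a + s • u)) u
      have h2 := hsmooth (a + t • u) (a + s • u)
      have h3 : (a + t • u) - (a + s • u) = (t - s) • u := by
        rw [sub_smul]; abel
      rw [h3, norm_smul] at h2
      have h4 : ‖(t : ℝ) - s‖ = t - s := by
        rw [Real.norm_eq_abs, abs_of_nonneg (by linarith)]
      rw [h4] at h2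
      have hun : (0 : ℝ) ≤ ‖u‖ := norm_nonneg _
      calc ⟪gradient g (a + t • u) - gradient g (a + s • u), u⟫
          ≤ ‖gradient g (a + t • u) - gradient g (a + s • u)‖ * ‖u‖ := h1
        _ ≤ (β * (t - s) * ‖u‖) * ‖u‖ := by
            apply mul_le_mul_of_nonneg_right _ hun
            simpa [mul_assoc] using h2
        _ = β * (t - s) * ‖u‖ ^ 2 := by ring
    have hinner : ⟪gradient g (a + t • u) - gradient g (a + s • u), u⟫
        = ⟪gradient g (a + t • u), u⟫ - ⟪gradient g (a + s • u), u⟫ :=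
      inner_sub_left _ _ _
    rw [hinner] at key
    dsimp only
    nlinarith [key]
  have hconvf : ConvexOn ℝ Set.univ f := hmono.convexOn_univ_of_deriv hfdiff
  have hder0 : HasDerivAt f (-⟪gradient g a, u⟫) 0 := by
    have := hfder 0
    simpa using this
  have hs := hconvf.le_slope_of_hasDerivAt (Set.mem_univ 0) (Set.mem_univ 1) zero_lt_one hder0
  rw [slope_def_field] at hs
  have h0 : a + (0 : ℝ) • u = a := by simp
  have h1 : a + (1 : ℝ) • u = b := by simp [hu]
  simp only [hf, h0, h1] at hs
  have : -⟪gradient g a, u⟫ ≤ (β / 2 * ‖u‖ ^ 2 * 1 ^ 2 - g b) - (β / 2 * ‖u‖ ^ 2 * 0 ^ 2 - g a) := by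
    have := hs
    field_simp at this ⊢
    linarith
  nlinarith [this]

private lemma cocoercive {dd : ℕ} (g : EuclideanSpace ℝ (Fin dd) → ℝ)
    (hconv : ConvexOn ℝ Set.univ g) (hdiff : Differentiable ℝ g) (β : ℝ) (hβ : 0 < β)
    (hsmooth : ∀ z w : EuclideanSpace ℝ (Fin dd),
      ‖gradient g z - gradient g w‖ ≤ β * ‖z - w‖)
    (x y : EuclideanSpace ℝ (Fin dd)) :
    ‖gradient g x - gradient g y‖ ^ 2 / (2 * β)
      ≤ g y - g x - ⟪gradient g x, y - x⟫ := by
  set v := gradient g y - gradient g x with hv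
  set w := y - (1 / β) • v with hw
  have hdesc := descent g hdiff β hsmooth y w
  have hgi := grad_ineq g hconv hdiff x w
  have hwy : w - y = -((1 / β) • v) := by rw [hw]; abel
  have hwx : w - x = (y - x) - (1 / β) • v := by rw [hw]; abel
  rw [hwy] at hdesc
  rw [hwx] at hgi
  have e1 : ⟪gradient g y, -((1 / β) • v)⟫ = -(1 / β) * ⟪gradient g y, v⟫ := by
    rw [inner_neg_right, real_inner_smul_right]; ring
  have e2 : ⟪gradient g x, (y - x) - (1 / β) • v⟫
      = ⟪gradient g x, y - x⟫ - (1 / β) * ⟪gradient g x, v⟫ := by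
    rw [inner_sub_right, real_inner_smul_right]
  have e3 : ‖-((1 / β) • v)‖ ^ 2 = (1 / β) ^ 2 * ‖v‖ ^ 2 := by
    rw [norm_neg, norm_smul, mul_pow]
    simp [abs_of_pos (by positivity : (0:ℝ) < 1 / β)]
  have e4 : ⟪gradient g y, v⟫ - ⟪gradient g x, v⟫ = ‖v‖ ^ 2 := by
    rw [← inner_sub_left, ← hv, real_inner_self_eq_norm_sq]
  rw [e1, e3] at hdesc
  rw [e2] at hgi
  have hvx : ‖gradient g x - gradient g y‖ = ‖v‖ := by rw [hv, norm_sub_rev]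
  rw [hvx]
  have hβ' : β ≠ 0 := ne_of_gt hβ
  have hcomb : (1 / β) * ⟪gradient g y, v⟫ - (1 / β) * ⟪gradient g x, v⟫
      - β / 2 * ((1 / β) ^ 2 * ‖v‖ ^ 2) ≤ g y - g x - ⟪gradient g x, y - x⟫ := by
    linarith
  have hval : ‖v‖ ^ 2 / (2 * β) = (1 / β) * ‖v‖ ^ 2 - β / 2 * ((1 / β) ^ 2 * ‖v‖ ^ 2) := by
    field_simp
    ring
  have e5 : 1 / β * ⟪gradient g y, v⟫ - 1 / β * ⟪gradient g x, v⟫ = 1 / β * ‖v‖ ^ 2 := by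
    rw [← mul_sub, e4]
  rw [hval]
  linarith [hcomb, e5]

/-- lower bound on the Bregman residual of the inverse barrier
via gradient differences of `g`.  For `g` convex and `β`-smooth with
`g x < 0`, `g y < 0`, `ḡ = max(|g x|, |g y|)` and
`Δ = 1/g(x) − 1/g(y) − ⟪∇g x, y − x⟫ / g(x)²`, one has
`Δ ≥ ‖∇g x − ∇g y‖² / (2 β ḡ²)`. -/
theorem stmt_14 (dd : ℕ) (g : EuclideanSpace ℝ (Fin dd) → ℝ)
    (hconv : ConvexOn ℝ Set.univ g) (hdiff : Differentiable ℝ g)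
    (β : ℝ)
    (hsmooth : ∀ z w : EuclideanSpace ℝ (Fin dd),
      ‖gradient g z - gradient g w‖ ≤ β * ‖z - w‖)
    (x y : EuclideanSpace ℝ (Fin dd)) (hx : g x < 0) (hy : g y < 0)
    (gbar Δ : ℝ)
    (hgbar : gbar = max |g x| |g y|)
    (hΔ : Δ = 1 / g x - 1 / g y - ⟪gradient g x, y - x⟫ / (g x)^2) :
    ‖gradient g x - gradient g y‖^2 / (2 * β * gbar^2) ≤ Δ := by
  have hgx : g x ≠ 0 := ne_of_lt hx
  have hgy : g y ≠ 0 := ne_of_lt hy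
  have hD : 0 ≤ g y - g x - ⟪gradient g x, y - x⟫ := by
    have := grad_ineq g hconv hdiff x y
    linarith
  have hΔsplit : Δ = (g y - g x - ⟪gradient g x, y - x⟫) / (g x) ^ 2
      + (g x - g y) ^ 2 / ((g x) ^ 2 * (-(g y))) := by
    rw [hΔ]
    field_simp
    ring
  have hΔnn : 0 ≤ Δ := by
    rw [hΔsplit]
    have h1 : (0:ℝ) ≤ (g y - g x - ⟪gradient g x, y - x⟫) / (g x) ^ 2 := by positivity
    have h2 : (0:ℝ) ≤ (g x - g y) ^ 2 / ((g x) ^ 2 * (-(g y))) := by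
      apply div_nonneg (sq_nonneg _)
      have : (0:ℝ) < -(g y) := by linarith
      positivity
    linarith
  rcases le_or_gt β 0 with hβ | hβ
  · -- gradient g x = gradient g y, so LHS = 0
    have h0 : gradient g x - gradient g y = 0 := by
      have h := hsmooth x y
      have : β * ‖x - y‖ ≤ 0 :=
        mul_nonpos_of_nonpos_of_nonneg hβ (norm_nonneg _)
      exact norm_eq_zero.mp (le_antisymm (h.trans this) (norm_nonneg _))
    rw [h0]
    simpa using hΔnn
  · -- main case
    have hco := cocoercive g hconv hdiff β hβ hsmooth x y
    have hgbar_pos : 0 < gbar := by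
      rw [hgbar]
      have : (0:ℝ) < |g x| := abs_pos.mpr hgx
      exact lt_of_lt_of_le this (le_max_left _ _)
    have hax : |g x| ≤ gbar := hgbar ▸ le_max_left _ _
    have hgx2 : (g x) ^ 2 ≤ gbar ^ 2 := by
      rw [← sq_abs (g x)]
      exact pow_le_pow_left₀ (abs_nonneg _) hax 2
    set N := ‖gradient g x - gradient g y‖ ^ 2 with hN
    have hNnn : 0 ≤ N := sq_nonneg _
    -- Δ ≥ D / gx² ≥ (N/(2β)) / gx² ≥ N / (2β gbar²)
    have step1 : (N / (2 * β)) / (g x) ^ 2 ≤ Δ := by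
      rw [hΔsplit]
      have h2 : (0:ℝ) ≤ (g x - g y) ^ 2 / ((g x) ^ 2 * (-(g y))) := by
        apply div_nonneg (sq_nonneg _)
        have : (0:ℝ) < -(g y) := by linarith
        positivity
      have h1 : (N / (2 * β)) / (g x) ^ 2
          ≤ (g y - g x - ⟪gradient g x, y - x⟫) / (g x) ^ 2 := by
        apply div_le_div_of_nonneg_right hco
        positivity
      linarith
    have step2 : N / (2 * β * gbar ^ 2) ≤ (N / (2 * β)) / (g x) ^ 2 := by
      rw [div_div]
      have hd1 : (0:ℝ) < 2 * β * (g x) ^ 2 := by positivity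
      have hd2 : 2 * β * (g x) ^ 2 ≤ 2 * β * gbar ^ 2 := by nlinarith
      exact div_le_div_of_nonneg_left hNnn hd1 hd2
    exact step2.trans step1
end

section
/- Let g^1,…,g^q : ℝ^d → ℝ be convex, β-smooth functions that are β₁-Lipschitz continuous on their common sublevel set {z : g^j(z) ≤ 0 ∀j}, and define B(z) := ∑_{j=1}^q −1/g^j(z). Let M > 0 and let x, y ∈ ℝ^d satisfy g^j(x) < 0, g^j(y) < 0, −1/g^j(x) ≤ M, and −1/g^j(y) ≤ M for every j. Then B(y) − B(x) − ⟨∇B(x), y − x⟩ ≥ ‖∇B(y) − ∇B(x)‖² / ((8β₁²M³ + 4βM²) q). -/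
open RealInnerProductSpace

set_option maxHeartbeats 1000000

section Aux

variable {E : Type*} [NormedAddCommGroup E] [InnerProductSpace ℝ E] [CompleteSpace E]

/-- Derivative of a differentiable function along a line. -/
lemma stmt16_line_hasDerivAt (g : E → ℝ) (hg : Differentiable ℝ g) (z d : E) (t : ℝ) :
    HasDerivAt (fun s : ℝ => g (z + s • d)) ⟪gradient g (z + t • d), d⟫ t := by
  have hF : HasFDerivAt g ((InnerProductSpace.toDual ℝ E) (gradient g (z + t • d))) (z + t • d) :=
    hasGradientAt_iff_hasFDerivAt.1 ((hg _).hasGradientAt)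
  have hc : HasDerivAt (fun s : ℝ => z + s • d) d t := by
    simpa using ((hasDerivAt_id t).smul_const d).const_add z
  have := hF.comp_hasDerivAt t hc
  rw [InnerProductSpace.toDual_apply_apply] at this
  exact this

/-- First-order condition for convex differentiable functions. -/
lemma stmt16_first_order (g : E → ℝ) (hg : Differentiable ℝ g)
    (hc : ConvexOn ℝ Set.univ g) (z w : E) :
    g z + ⟪gradient g z, w - z⟫ ≤ g w := by
  set ψ : ℝ → ℝ := fun s => g (z + s • (w - z)) with hψ
  have hconv : ConvexOn ℝ Set.univ ψ := by
    have := hc.comp_affineMap (AffineMap.lineMap z w : ℝ →ᵃ[ℝ] E)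
    simp only [Set.preimage_univ] at this
    suffices e : ψ = g ∘ ⇑(AffineMap.lineMap z w) by rw [e]; exact this
    funext s
    simp [hψ, AffineMap.lineMap_apply, Function.comp]
    rw [add_comm]
  have hder : HasDerivAt ψ ⟪gradient g z, w - z⟫ 0 := by
    have := stmt16_line_hasDerivAt g hg z (w - z) 0
    simpa using this
  have hslope := hconv.le_slope_of_hasDerivAt (Set.mem_univ (0:ℝ)) (Set.mem_univ (1:ℝ))
    zero_lt_one hder
  rw [slope_def_field] at hslope
  simp [hψ] at hslope
  have e : ⟪gradient g z, w - z⟫ = (fderiv ℝ g z) w - (fderiv ℝ g z) z := by simp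
  linarith

/-- Descent lemma for functions with Lipschitz gradient. -/
lemma stmt16_descent (g : E → ℝ) (hg : Differentiable ℝ g) (β : ℝ)
    (hs : ∀ z w : E, ‖gradient g z - gradient g w‖ ≤ β * ‖z - w‖) (z w : E) :
    g w ≤ g z + ⟪gradient g z, w - z⟫ + β / 2 * ‖w - z‖ ^ 2 := by
  set d := w - z with hd
  set C1 : ℝ := ⟪gradient g z, d⟫ with hC1
  set C2 : ℝ := β / 2 * ‖d‖ ^ 2 with hC2
  set φ : ℝ → ℝ := fun t => g (z + t • d) - t * C1 - t ^ 2 * C2 with hφ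
  have hder : ∀ t : ℝ, HasDerivAt φ
      (⟪gradient g (z + t • d), d⟫ - C1 - 2 * t * C2) t := by
    intro t
    have h1 := stmt16_line_hasDerivAt g hg z d t
    have h2 : HasDerivAt (fun s : ℝ => s * C1) C1 t := hasDerivAt_mul_const C1
    have h3 : HasDerivAt (fun s : ℝ => s ^ 2 * C2) (2 * t * C2) t := by
      have := (hasDerivAt_pow 2 t).mul_const C2
      simpa [mul_comm] using this
    exact (h1.sub h2).sub h3
  have hmono : AntitoneOn φ (Set.Icc 0 1) := by
    apply antitoneOn_of_deriv_nonpos (convex_Icc 0 1)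
    · exact Continuous.continuousOn (by
        have : Continuous φ := by
          apply Continuous.sub
          apply Continuous.sub
          · exact hg.continuous.comp (by continuity)
          · exact continuous_id.mul continuous_const
          · exact (continuous_pow 2).mul continuous_const
        exact this)
    · intro t ht
      exact ((hder t).differentiableAt).differentiableWithinAt
    · intro t ht
      rw [interior_Icc] at ht
      rw [(hder t).deriv]
      have hb : ⟪gradient g (z + t • d) - gradient g z, d⟫ ≤ β * t * ‖d‖ ^ 2 := by
        calc ⟪gradient g (z + t • d) - gradient g z, d⟫
            ≤ ‖gradient g (z + t • d) - gradient g z‖ * ‖d‖ := real_inner_le_norm _ _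
          _ ≤ (β * ‖(z + t • d) - z‖) * ‖d‖ := by
              apply mul_le_mul_of_nonneg_right (hs _ _) (norm_nonneg _)
          _ = β * t * ‖d‖ ^ 2 := by
              rw [show (z + t • d) - z = t • d by abel, norm_smul]
              simp [Real.norm_eq_abs, abs_of_pos ht.1]
              ring
      rw [inner_sub_left] at hb
      have : 2 * t * C2 = β * t * ‖d‖ ^ 2 := by rw [hC2]; ring
      linarith
  have h01 := hmono (Set.mem_Icc.2 ⟨le_refl 0, zero_le_one⟩)
      (Set.mem_Icc.2 ⟨zero_le_one, le_refl 1⟩) zero_le_one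
  have hφ0 : φ 0 = g z := by simp [hφ]
  have hφ1 : φ 1 = g w - C1 - C2 := by
    simp [hφ, hd]
  rw [hφ0, hφ1] at h01
  show g w ≤ g z + C1 + C2
  linarith

/-- Cocoercivity of convex functions with Lipschitz gradient. -/
lemma stmt16_cocoercivity (g : E → ℝ) (hg : Differentiable ℝ g)
    (β : ℝ) (hβ : 0 ≤ β)
    (hs : ∀ z w : E, ‖gradient g z - gradient g w‖ ≤ β * ‖z - w‖)
    (hfo : ∀ z w : E, g z + ⟪gradient g z, w - z⟫ ≤ g w)
    (x y : E) :
    ‖gradient g y - gradient g x‖ ^ 2 ≤ 2 * β * (g y - g x - ⟪gradient g x, y - x⟫) := by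
  rcases eq_or_lt_of_le hβ with h0 | hβpos
  · have : ‖gradient g y - gradient g x‖ ≤ 0 := by
      have := hs y x; rw [← h0] at this; simpa using this
    have hn : ‖gradient g y - gradient g x‖ = 0 := le_antisymm this (norm_nonneg _)
    rw [hn, ← h0]
    simp
  · set h := gradient g y - gradient g x with hh
    set yh := y - β⁻¹ • h with hyh
    have hA := hfo x yh
    have hB := stmt16_descent g hg β hs y yh
    have e1 : yh - y = -(β⁻¹ • h) := by rw [hyh]; abel
    have e2 : ‖yh - y‖ ^ 2 = β⁻¹ ^ 2 * ‖h‖ ^ 2 := by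
      rw [e1, norm_neg, norm_smul, Real.norm_eq_abs, abs_of_pos (inv_pos.2 hβpos), mul_pow]
    have e3 : ⟪gradient g y, yh - y⟫ = -(β⁻¹ * ⟪gradient g y, h⟫) := by
      rw [e1, inner_neg_right, real_inner_smul_right]
    have e4 : ⟪gradient g x, yh - x⟫ = ⟪gradient g x, y - x⟫ - β⁻¹ * ⟪gradient g x, h⟫ := by
      have : yh - x = (y - x) - β⁻¹ • h := by rw [hyh]; abel
      rw [this, inner_sub_right, real_inner_smul_right]
    have e5 : ⟪gradient g y, h⟫ - ⟪gradient g x, h⟫ = ‖h‖ ^ 2 := by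
      rw [← inner_sub_left, ← hh, real_inner_self_eq_norm_sq]
    rw [e2, e3] at hB
    rw [e4] at hA
    have hβne : (β : ℝ) ≠ 0 := ne_of_gt hβpos
    have e6 : β⁻¹ * ⟪gradient g y, h⟫ - β⁻¹ * ⟪gradient g x, h⟫ = β⁻¹ * ‖h‖ ^ 2 := by
      rw [← mul_sub, e5]
    have key : β⁻¹ * ‖h‖ ^ 2 - β / 2 * (β⁻¹ ^ 2 * ‖h‖ ^ 2) ≤ g y - g x - ⟪gradient g x, y - x⟫ := by
      linarith
    have : β⁻¹ * ‖h‖ ^ 2 - β / 2 * (β⁻¹ ^ 2 * ‖h‖ ^ 2) = ‖h‖ ^ 2 / (2 * β) := by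
      field_simp
      ring
    rw [this] at key
    rw [div_le_iff₀ (by positivity : (0:ℝ) < 2 * β)] at key
    linarith

/-- The gradient of a function that is `β₁`-Lipschitz on the feasible set is bounded by `β₁`
at strictly feasible points. -/
lemma stmt16_gradient_norm_le {qq : ℕ} (g : Fin qq → E → ℝ) (hg : ∀ j, Differentiable ℝ (g j))
    (β₁ : ℝ) (hβ₁ : 0 ≤ β₁)
    (hlip : ∀ j, ∀ z w : E, (∀ l, g l z ≤ 0) → (∀ l, g l w ≤ 0) → |g j z - g j w| ≤ β₁ * ‖z - w‖)
    (z : E) (hz : ∀ l, g l z < 0) (j : Fin qq) :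
    ‖gradient (g j) z‖ ≤ β₁ := by
  rcases eq_or_ne (gradient (g j) z) 0 with h0 | h0
  · rw [h0]; simpa using hβ₁
  set G := gradient (g j) z with hG
  set v : E := ‖G‖⁻¹ • G with hv
  have hnG : (0:ℝ) < ‖G‖ := norm_pos_iff.2 h0
  have hder : HasDerivAt (fun t : ℝ => g j (z + t • v)) ‖G‖ 0 := by
    have h1 := stmt16_line_hasDerivAt (g j) (hg j) z v 0
    have h2 : ⟪gradient (g j) (z + (0:ℝ) • v), v⟫ = ‖G‖ := by
      rw [show z + (0:ℝ) • v = z by simp, ← hG, hv, real_inner_smul_right,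
        real_inner_self_eq_norm_sq]
      field_simp
    rwa [h2] at h1
  have hev : ∀ᶠ t : ℝ in nhds 0, ∀ l, g l (z + t • v) ≤ 0 := by
    rw [Filter.eventually_all]
    intro l
    have hcont : Continuous (fun t : ℝ => g l (z + t • v)) :=
      (hg l).continuous.comp (by continuity)
    have htend : Filter.Tendsto (fun t : ℝ => g l (z + t • v)) (nhds 0) (nhds (g l z)) := by
      have := hcont.tendsto 0
      simpa using this
    filter_upwards [htend.eventually_lt_const (hz l)] with t ht using ht.le
  have hslope : ∀ᶠ t : ℝ in nhdsWithin 0 (Set.Ioi 0),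
      slope (fun t : ℝ => g j (z + t • v)) 0 t ≤ β₁ := by
    have hev' : ∀ᶠ t : ℝ in nhdsWithin 0 (Set.Ioi 0), ∀ l, g l (z + t • v) ≤ 0 :=
      nhdsWithin_le_nhds hev
    filter_upwards [hev', self_mem_nhdsWithin] with t ht (ht0 : t ∈ Set.Ioi 0)
    rw [slope_def_field]
    have hl := hlip j (z + t • v) z ht (fun l => (hz l).le)
    have hnorm : ‖(z + t • v) - z‖ = t := by
      rw [show (z + t • v) - z = t • v by abel, norm_smul, Real.norm_eq_abs,
        abs_of_pos ht0, hv, norm_smul, Real.norm_eq_abs, abs_of_pos (inv_pos.2 hnG)]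
      field_simp
    rw [hnorm] at hl
    have h1 : g j (z + t • v) - g j z ≤ β₁ * t := (abs_le.1 hl).2
    simp only [sub_zero]
    rw [div_le_iff₀ ht0]
    calc g j (z + t • v) - g j (z + (0:ℝ) • v) = g j (z + t • v) - g j z := by simp
      _ ≤ β₁ * t := h1
  have htends : Filter.Tendsto (slope (fun t : ℝ => g j (z + t • v)) 0)
      (nhdsWithin 0 (Set.Ioi 0)) (nhds ‖G‖) :=
    (hasDerivAt_iff_tendsto_slope.1 hder).mono_left
      (nhdsWithin_mono 0 (fun t ht => Set.mem_compl_singleton_iff.2 (ne_of_gt ht)))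
  exact le_of_tendsto htends hslope

/-- Gradient of the inverse barrier. -/
lemma stmt16_hasGradientAt_barrier {qq : ℕ} (g : Fin qq → E → ℝ)
    (hg : ∀ j, Differentiable ℝ (g j)) (z : E) (hz : ∀ j, g j z ≠ 0) :
    HasGradientAt (fun w => ∑ j, -(g j w)⁻¹)
      (∑ j, ((g j z) ^ 2)⁻¹ • gradient (g j) z) z := by
  rw [hasGradientAt_iff_hasFDerivAt]
  have hper : ∀ j : Fin qq, HasFDerivAt (fun w => -(g j w)⁻¹)
      (((g j z) ^ 2)⁻¹ • ((InnerProductSpace.toDual ℝ E) (gradient (g j) z))) z := by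
    intro j
    have hF : HasFDerivAt (g j) ((InnerProductSpace.toDual ℝ E) (gradient (g j) z)) z :=
      hasGradientAt_iff_hasFDerivAt.1 ((hg j z).hasGradientAt)
    have h1 := (hasDerivAt_inv (hz j)).comp_hasFDerivAt z hF
    have h2 := h1.neg
    simpa [neg_smul, Function.comp_def, Pi.neg_def] using h2
  have hsum := HasFDerivAt.fun_sum (fun j (_ : j ∈ Finset.univ) => hper j)
  refine hsum.congr_fderiv ?_
  rw [map_sum]
  congr 1
  funext j
  rw [map_smulₛₗ]
  simp [starRingEnd_apply]

end Aux

section KeyAlg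

variable {E : Type*} [NormedAddCommGroup E] [InnerProductSpace ℝ E]

/-- Key per-constraint algebraic inequality. -/
lemma stmt16_key_alg (M β β₁ a b e p : ℝ) (u v : E)
    (hM : 0 < M) (hβ : 0 ≤ β) (hβ₁ : 0 ≤ β₁)
    (ha : a ≤ -M⁻¹) (hb : b ≤ -M⁻¹) (hv : ‖v‖ ≤ β₁)
    (hee : 0 ≤ e) (hep : e = b - a - p)
    (hco : ‖v - u‖ ^ 2 ≤ 2 * β * e) :
    0 ≤ (-b⁻¹) - (-a⁻¹) - (a ^ 2)⁻¹ * p ∧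
    ‖(b ^ 2)⁻¹ • v - (a ^ 2)⁻¹ • u‖ ^ 2 ≤
      (8 * β₁ ^ 2 * M ^ 3 + 4 * β * M ^ 2) * ((-b⁻¹) - (-a⁻¹) - (a ^ 2)⁻¹ * p) := by
  have hMinv : (0:ℝ) < M⁻¹ := inv_pos.2 hM
  have ha0 : a < 0 := lt_of_le_of_lt ha (by linarith)
  have hb0 : b < 0 := lt_of_le_of_lt hb (by linarith)
  have hane : a ≠ 0 := ne_of_lt ha0
  have hbne : b ≠ 0 := ne_of_lt hb0
  have ha2 : (0:ℝ) < a ^ 2 := by positivity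
  have hb2 : (0:ℝ) < b ^ 2 := by positivity
  obtain ⟨T1, hT1⟩ : ∃ t : ℝ, t = (b - a) ^ 2 / (a ^ 2 * (-b)) := ⟨_, rfl⟩
  obtain ⟨T2, hT2⟩ : ∃ t : ℝ, t = e / a ^ 2 := ⟨_, rfl⟩
  have hT1n : 0 ≤ T1 := by
    rw [hT1]
    apply div_nonneg (sq_nonneg _)
    have : (0:ℝ) < -b := by linarith
    positivity
  have hT2n : 0 ≤ T2 := by rw [hT2]; exact div_nonneg hee ha2.le
  have hD : (-b⁻¹) - (-a⁻¹) - (a ^ 2)⁻¹ * p = T1 + T2 := by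
    rw [hT1, hT2, hep]
    field_simp
    ring
  rw [hD]
  constructor
  · linarith
  have hMa : (a ^ 2)⁻¹ ≤ M ^ 2 := by
    rw [inv_le_comm₀ ha2 (by positivity)]
    have h1 : M⁻¹ ≤ -a := by linarith
    calc (M ^ 2)⁻¹ = M⁻¹ * M⁻¹ := by rw [sq, mul_inv]
      _ ≤ (-a) * (-a) := mul_le_mul h1 h1 hMinv.le (by linarith)
      _ = a ^ 2 := by ring
  have hMb : (b ^ 2)⁻¹ ≤ M ^ 2 := by
    rw [inv_le_comm₀ hb2 (by positivity)]
    have h1 : M⁻¹ ≤ -b := by linarith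
    calc (M ^ 2)⁻¹ = M⁻¹ * M⁻¹ := by rw [sq, mul_inv]
      _ ≤ (-b) * (-b) := mul_le_mul h1 h1 hMinv.le (by linarith)
      _ = b ^ 2 := by ring
  obtain ⟨h, hh⟩ : ∃ w : E, w = (b ^ 2)⁻¹ • v - (a ^ 2)⁻¹ • u := ⟨_, rfl⟩
  rw [← hh]
  have hsplit : h = (a ^ 2)⁻¹ • (v - u) + ((b ^ 2)⁻¹ - (a ^ 2)⁻¹) • v := by
    rw [hh, smul_sub, sub_smul]; abel
  have hnorm : ‖h‖ ≤ (a ^ 2)⁻¹ * ‖v - u‖ + |(b ^ 2)⁻¹ - (a ^ 2)⁻¹| * β₁ := by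
    rw [hsplit]
    calc ‖(a ^ 2)⁻¹ • (v - u) + ((b ^ 2)⁻¹ - (a ^ 2)⁻¹) • v‖
        ≤ ‖(a ^ 2)⁻¹ • (v - u)‖ + ‖((b ^ 2)⁻¹ - (a ^ 2)⁻¹) • v‖ := norm_add_le _ _
      _ ≤ (a ^ 2)⁻¹ * ‖v - u‖ + |(b ^ 2)⁻¹ - (a ^ 2)⁻¹| * β₁ := by
          rw [norm_smul, norm_smul, Real.norm_eq_abs, Real.norm_eq_abs,
            abs_of_pos (inv_pos.2 ha2)]
          gcongr
  have hn2 : ‖h‖ ^ 2 ≤ 2 * ((a ^ 2)⁻¹) ^ 2 * ‖v - u‖ ^ 2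
      + 2 * ((b ^ 2)⁻¹ - (a ^ 2)⁻¹) ^ 2 * β₁ ^ 2 := by
    have h1 : (0:ℝ) ≤ ‖h‖ := norm_nonneg _
    have h2 : (0:ℝ) ≤ (a ^ 2)⁻¹ * ‖v - u‖ + |(b ^ 2)⁻¹ - (a ^ 2)⁻¹| * β₁ := by positivity
    have hsq := mul_self_le_mul_self h1 hnorm
    have habs : |(b ^ 2)⁻¹ - (a ^ 2)⁻¹| ^ 2 * β₁ ^ 2 = ((b ^ 2)⁻¹ - (a ^ 2)⁻¹) ^ 2 * β₁ ^ 2 := by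
      rw [sq_abs]
    linarith [hsq, sq_nonneg ((a ^ 2)⁻¹ * ‖v - u‖ - |(b ^ 2)⁻¹ - (a ^ 2)⁻¹| * β₁), habs]
  have hP1 : 2 * ((a ^ 2)⁻¹) ^ 2 * ‖v - u‖ ^ 2 ≤ 4 * β * M ^ 2 * T2 := by
    have h1 : 2 * ((a ^ 2)⁻¹) ^ 2 * ‖v - u‖ ^ 2 ≤ 2 * ((a ^ 2)⁻¹) ^ 2 * (2 * β * e) := by
      apply mul_le_mul_of_nonneg_left hco (by positivity)
    have h2 : 2 * ((a ^ 2)⁻¹) ^ 2 * (2 * β * e) = 4 * β * (a ^ 2)⁻¹ * T2 := by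
      rw [hT2]; field_simp; ring
    have h3 : 4 * β * (a ^ 2)⁻¹ * T2 ≤ 4 * β * M ^ 2 * T2 := by
      apply mul_le_mul_of_nonneg_right _ hT2n
      have h4 := mul_le_mul_of_nonneg_left hMa (by linarith : (0:ℝ) ≤ 4 * β)
      linarith
    linarith
  have hP2 : 2 * ((b ^ 2)⁻¹ - (a ^ 2)⁻¹) ^ 2 * β₁ ^ 2 ≤ 8 * β₁ ^ 2 * M ^ 3 * T1 := by
    have hkey : ((b ^ 2)⁻¹ - (a ^ 2)⁻¹) ^ 2 ≤ 4 * M ^ 3 * T1 := by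
      have hexp : ((b ^ 2)⁻¹ - (a ^ 2)⁻¹) ^ 2 = (b - a) ^ 2 * (a + b) ^ 2 / (a ^ 4 * b ^ 4) := by
        field_simp
        ring
      rw [hexp, hT1]
      rw [div_le_iff₀ (by positivity)]
      have hab : (a + b) ^ 2 ≤ 4 * M ^ 3 * a ^ 2 * (-b) ^ 3 := by
        obtain ⟨α, hα⟩ : ∃ t : ℝ, t = -a := ⟨_, rfl⟩
        obtain ⟨γ, hγ⟩ : ∃ t : ℝ, t = -b := ⟨_, rfl⟩
        have hα1 : M⁻¹ ≤ α := by rw [hα]; linarith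
        have hγ1 : M⁻¹ ≤ γ := by rw [hγ]; linarith
        have hαpos : 0 < α := lt_of_lt_of_le hMinv hα1
        have hγpos : 0 < γ := lt_of_lt_of_le hMinv hγ1
        have h1 : 1 ≤ M * α := by rw [← mul_inv_cancel₀ (ne_of_gt hM)]; gcongr
        have h2 : 1 ≤ M * γ := by rw [← mul_inv_cancel₀ (ne_of_gt hM)]; gcongr
        have p3 : 1 ≤ (M * γ) ^ 3 := one_le_pow₀ h2
        have p2 : 1 ≤ (M * α) ^ 2 * (M * γ) := by
          have q1 : 1 ≤ (M * α) ^ 2 := one_le_pow₀ h1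
          calc (1:ℝ) = 1 * 1 := by ring
            _ ≤ (M * α) ^ 2 * (M * γ) := mul_le_mul q1 h2 zero_le_one (by positivity)
        have e1 : α ^ 2 ≤ M ^ 3 * α ^ 2 * γ ^ 3 := by
          calc α ^ 2 = α ^ 2 * 1 := by ring
            _ ≤ α ^ 2 * (M * γ) ^ 3 := by
                apply mul_le_mul_of_nonneg_left p3 (sq_nonneg _)
            _ = M ^ 3 * α ^ 2 * γ ^ 3 := by ring
        have e2 : γ ^ 2 ≤ M ^ 3 * α ^ 2 * γ ^ 3 := by
          calc γ ^ 2 = γ ^ 2 * 1 := by ring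
            _ ≤ γ ^ 2 * ((M * α) ^ 2 * (M * γ)) := by
                apply mul_le_mul_of_nonneg_left p2 (sq_nonneg _)
            _ = M ^ 3 * α ^ 2 * γ ^ 3 := by ring
        have hsub : (a + b) ^ 2 = (α + γ) ^ 2 := by rw [hα, hγ]; ring
        have hsub2 : a ^ 2 = α ^ 2 := by rw [hα]; ring
        have hsub3 : (-b) ^ 3 = γ ^ 3 := by rw [hγ]
        rw [hsub, hsub2, hsub3]
        linarith [sq_nonneg (α - γ), e1, e2]
      calc (b - a) ^ 2 * (a + b) ^ 2
          ≤ (b - a) ^ 2 * (4 * M ^ 3 * a ^ 2 * (-b) ^ 3) := by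
            apply mul_le_mul_of_nonneg_left hab (sq_nonneg _)
        _ = 4 * M ^ 3 * ((b - a) ^ 2 / (a ^ 2 * (-b))) * (a ^ 4 * b ^ 4) := by
            field_simp
    linarith [mul_le_mul_of_nonneg_left hkey (by positivity : (0:ℝ) ≤ 2 * β₁ ^ 2)]
  have hC1 : 4 * β * M ^ 2 * T2 + 8 * β₁ ^ 2 * M ^ 3 * T1 ≤
      (8 * β₁ ^ 2 * M ^ 3 + 4 * β * M ^ 2) * (T1 + T2) := by
    have c1 : (0:ℝ) ≤ 8 * β₁ ^ 2 * M ^ 3 := by positivity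
    have c2 : (0:ℝ) ≤ 4 * β * M ^ 2 := by positivity
    linarith [mul_nonneg c1 hT2n, mul_nonneg c2 hT1n]
  calc ‖h‖ ^ 2 ≤ 2 * ((a ^ 2)⁻¹) ^ 2 * ‖v - u‖ ^ 2
      + 2 * ((b ^ 2)⁻¹ - (a ^ 2)⁻¹) ^ 2 * β₁ ^ 2 := hn2
    _ ≤ 4 * β * M ^ 2 * T2 + 8 * β₁ ^ 2 * M ^ 3 * T1 := by linarith
    _ ≤ (8 * β₁ ^ 2 * M ^ 3 + 4 * β * M ^ 2) * (T1 + T2) := hC1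

end KeyAlg

/-- local smoothness of the multi-constraint inverse barrier.
`g¹,…,g^q` convex, `β`-smooth, `β₁`-Lipschitz on `{z : gʲ z ≤ 0 ∀ j}`, and
`B z = ∑ j, −1/gʲ z`.  If `M > 0` and `x, y` satisfy `gʲ x < 0`, `gʲ y < 0`,
`−1/gʲ x ≤ M`, `−1/gʲ y ≤ M` for every `j`, then
`B y − B x − ⟪∇B x, y − x⟫ ≥ ‖∇B y − ∇B x‖² / ((8 β₁² M³ + 4 β M²) q)`. -/
theorem stmt_16 (dd qq : ℕ) (g : Fin qq → EuclideanSpace ℝ (Fin dd) → ℝ)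
    (hconv : ∀ j, ConvexOn ℝ Set.univ (g j))
    (hdiff : ∀ j, Differentiable ℝ (g j))
    (β β₁ : ℝ)
    (hsmooth : ∀ j, ∀ z w : EuclideanSpace ℝ (Fin dd),
      ‖gradient (g j) z - gradient (g j) w‖ ≤ β * ‖z - w‖)
    (hlip : ∀ j, ∀ z w : EuclideanSpace ℝ (Fin dd),
      (∀ l, g l z ≤ 0) → (∀ l, g l w ≤ 0) → |g j z - g j w| ≤ β₁ * ‖z - w‖)
    (M : ℝ) (hM : 0 < M)
    (x y : EuclideanSpace ℝ (Fin dd))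
    (hx : ∀ j, g j x < 0) (hy : ∀ j, g j y < 0)
    (hMx : ∀ j, -(g j x)⁻¹ ≤ M) (hMy : ∀ j, -(g j y)⁻¹ ≤ M)
    (B : EuclideanSpace ℝ (Fin dd) → ℝ) (hB : ∀ z, B z = ∑ j, -(g j z)⁻¹) :
    ‖gradient B y - gradient B x‖^2 / ((8 * β₁^2 * M^3 + 4 * β * M^2) * qq) ≤
      B y - B x - ⟪gradient B x, y - x⟫ := by
  have hBeq : B = fun z => ∑ j, -(g j z)⁻¹ := funext hB
  rcases eq_or_ne x y with rfl | hxy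
  · simp
  rcases Nat.eq_zero_or_pos qq with hq0 | hqpos
  · subst hq0
    have h0 : (fun z : EuclideanSpace ℝ (Fin dd) => ∑ j : Fin 0, -(g j z)⁻¹)
        = fun _ => (0:ℝ) := by funext z; simp
    rw [hBeq, h0]
    simp [gradient_const]
  -- main case
  subst hBeq
  have j0 : Fin qq := ⟨0, hqpos⟩
  have hxyn : (0:ℝ) < ‖x - y‖ := by
    rw [norm_pos_iff]; exact sub_ne_zero.2 hxy
  have hβ₁0 : 0 ≤ β₁ := by
    by_contra hcon
    push_neg at hcon
    have h := (abs_nonneg (g j0 x - g j0 y)).trans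
      (hlip j0 x y (fun l => (hx l).le) (fun l => (hy l).le))
    have : β₁ * ‖x - y‖ < 0 := mul_neg_of_neg_of_pos hcon hxyn
    linarith
  have hβ0 : 0 ≤ β := by
    by_contra hcon
    push_neg at hcon
    have h := (norm_nonneg (gradient (g j0) x - gradient (g j0) y)).trans (hsmooth j0 x y)
    have : β * ‖x - y‖ < 0 := mul_neg_of_neg_of_pos hcon hxyn
    linarith
  -- level bounds
  have hlev : ∀ (z : EuclideanSpace ℝ (Fin dd)), (∀ j, g j z < 0) →
      (∀ j, -(g j z)⁻¹ ≤ M) → ∀ j, g j z ≤ -M⁻¹ := by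
    intro z hz hMz j
    have h1 : (0:ℝ) < -(g j z) := neg_pos.2 (hz j)
    have h2 : (-(g j z))⁻¹ ≤ M := by
      rw [inv_neg]
      exact hMz j
    have h3 : M⁻¹ ≤ -(g j z) := (inv_le_comm₀ h1 hM).1 h2
    linarith
  have hax := hlev x hx hMx
  have hay := hlev y hy hMy
  -- per-constraint facts
  have hfo : ∀ j, ∀ z w : EuclideanSpace ℝ (Fin dd),
      g j z + ⟪gradient (g j) z, w - z⟫ ≤ g j w :=
    fun j z w => stmt16_first_order (g j) (hdiff j) (hconv j) z w
  have hvj : ∀ j, ‖gradient (g j) y‖ ≤ β₁ :=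
    fun j => stmt16_gradient_norm_le g hdiff β₁ hβ₁0 hlip y hy j
  have hkey : ∀ j : Fin qq,
      0 ≤ (-(g j y)⁻¹) - (-(g j x)⁻¹) - ((g j x) ^ 2)⁻¹ * ⟪gradient (g j) x, y - x⟫ ∧
      ‖((g j y) ^ 2)⁻¹ • gradient (g j) y - ((g j x) ^ 2)⁻¹ • gradient (g j) x‖ ^ 2 ≤
        (8 * β₁ ^ 2 * M ^ 3 + 4 * β * M ^ 2) *
          ((-(g j y)⁻¹) - (-(g j x)⁻¹) - ((g j x) ^ 2)⁻¹ * ⟪gradient (g j) x, y - x⟫) := by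
    intro j
    have hee : 0 ≤ g j y - g j x - ⟪gradient (g j) x, y - x⟫ := by
      have := hfo j x y
      linarith
    have hco := stmt16_cocoercivity (g j) (hdiff j) β hβ0 (hsmooth j) (hfo j) x y
    exact stmt16_key_alg M β β₁ (g j x) (g j y)
      (g j y - g j x - ⟪gradient (g j) x, y - x⟫) ⟪gradient (g j) x, y - x⟫
      (gradient (g j) x) (gradient (g j) y)
      hM hβ0 hβ₁0 (hax j) (hay j) (hvj j) hee rfl hco
  -- gradients of B
  have hGx : gradient (fun z => ∑ j, -(g j z)⁻¹) x
      = ∑ j, ((g j x) ^ 2)⁻¹ • gradient (g j) x :=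
    (stmt16_hasGradientAt_barrier g hdiff x (fun j => (hx j).ne)).gradient
  have hGy : gradient (fun z => ∑ j, -(g j z)⁻¹) y
      = ∑ j, ((g j y) ^ 2)⁻¹ • gradient (g j) y :=
    (stmt16_hasGradientAt_barrier g hdiff y (fun j => (hy j).ne)).gradient
  rw [hGx, hGy]
  simp only []
  -- rewrite difference of gradients as a sum
  rw [← Finset.sum_sub_distrib]
  -- rewrite the right-hand side as a sum
  have hIn : ⟪∑ j, ((g j x) ^ 2)⁻¹ • gradient (g j) x, y - x⟫
      = ∑ j, ((g j x) ^ 2)⁻¹ * ⟪gradient (g j) x, y - x⟫ := by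
    rw [sum_inner]
    exact Finset.sum_congr rfl fun j _ => real_inner_smul_left _ _ _
  have hRHS : (∑ j, -(g j y)⁻¹) - (∑ j, -(g j x)⁻¹)
      - ⟪∑ j, ((g j x) ^ 2)⁻¹ • gradient (g j) x, y - x⟫
      = ∑ j, ((-(g j y)⁻¹) - (-(g j x)⁻¹)
          - ((g j x) ^ 2)⁻¹ * ⟪gradient (g j) x, y - x⟫) := by
    rw [hIn, ← Finset.sum_sub_distrib, ← Finset.sum_sub_distrib]
  rw [hRHS]
  -- chain of inequalities
  obtain ⟨hDn, hHD⟩ : (∀ j : Fin qq, 0 ≤ (-(g j y)⁻¹) - (-(g j x)⁻¹)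
        - ((g j x) ^ 2)⁻¹ * ⟪gradient (g j) x, y - x⟫) ∧
      (∀ j : Fin qq,
        ‖((g j y) ^ 2)⁻¹ • gradient (g j) y - ((g j x) ^ 2)⁻¹ • gradient (g j) x‖ ^ 2 ≤
        (8 * β₁ ^ 2 * M ^ 3 + 4 * β * M ^ 2) *
          ((-(g j y)⁻¹) - (-(g j x)⁻¹) - ((g j x) ^ 2)⁻¹ * ⟪gradient (g j) x, y - x⟫)) :=
    ⟨fun j => (hkey j).1, fun j => (hkey j).2⟩
  have hsum_nonneg : 0 ≤ ∑ j, ((-(g j y)⁻¹) - (-(g j x)⁻¹)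
      - ((g j x) ^ 2)⁻¹ * ⟪gradient (g j) x, y - x⟫) :=
    Finset.sum_nonneg fun j _ => hDn j
  have hCnn : (0:ℝ) ≤ 8 * β₁ ^ 2 * M ^ 3 + 4 * β * M ^ 2 := by positivity
  have hnum : ‖∑ j, (((g j y) ^ 2)⁻¹ • gradient (g j) y
        - ((g j x) ^ 2)⁻¹ • gradient (g j) x)‖ ^ 2 ≤
      ((8 * β₁ ^ 2 * M ^ 3 + 4 * β * M ^ 2) * (qq : ℝ)) *
        ∑ j, ((-(g j y)⁻¹) - (-(g j x)⁻¹)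
          - ((g j x) ^ 2)⁻¹ * ⟪gradient (g j) x, y - x⟫) := by
    have s1 : ‖∑ j, (((g j y) ^ 2)⁻¹ • gradient (g j) y
          - ((g j x) ^ 2)⁻¹ • gradient (g j) x)‖
        ≤ ∑ j, ‖((g j y) ^ 2)⁻¹ • gradient (g j) y
          - ((g j x) ^ 2)⁻¹ • gradient (g j) x‖ := norm_sum_le _ _
    have s2 : ‖∑ j, (((g j y) ^ 2)⁻¹ • gradient (g j) y
          - ((g j x) ^ 2)⁻¹ • gradient (g j) x)‖ ^ 2
        ≤ (∑ j, ‖((g j y) ^ 2)⁻¹ • gradient (g j) y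
          - ((g j x) ^ 2)⁻¹ • gradient (g j) x‖) ^ 2 :=
      pow_le_pow_left₀ (norm_nonneg _) s1 2
    have s3 : (∑ j, ‖((g j y) ^ 2)⁻¹ • gradient (g j) y
          - ((g j x) ^ 2)⁻¹ • gradient (g j) x‖) ^ 2
        ≤ (qq : ℝ) * ∑ j, ‖((g j y) ^ 2)⁻¹ • gradient (g j) y
          - ((g j x) ^ 2)⁻¹ • gradient (g j) x‖ ^ 2 := by
      have := sq_sum_le_card_mul_sum_sq (s := (Finset.univ : Finset (Fin qq)))
        (f := fun j => ‖((g j y) ^ 2)⁻¹ • gradient (g j) y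
          - ((g j x) ^ 2)⁻¹ • gradient (g j) x‖)
      simpa [Finset.card_univ] using this
    have s4 : ∑ j, ‖((g j y) ^ 2)⁻¹ • gradient (g j) y
          - ((g j x) ^ 2)⁻¹ • gradient (g j) x‖ ^ 2
        ≤ (8 * β₁ ^ 2 * M ^ 3 + 4 * β * M ^ 2) *
          ∑ j, ((-(g j y)⁻¹) - (-(g j x)⁻¹)
            - ((g j x) ^ 2)⁻¹ * ⟪gradient (g j) x, y - x⟫) := by
      rw [Finset.mul_sum]
      exact Finset.sum_le_sum fun j _ => hHD j
    have s5 : (qq : ℝ) * ∑ j, ‖((g j y) ^ 2)⁻¹ • gradient (g j) y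
          - ((g j x) ^ 2)⁻¹ • gradient (g j) x‖ ^ 2
        ≤ (qq : ℝ) * ((8 * β₁ ^ 2 * M ^ 3 + 4 * β * M ^ 2) *
          ∑ j, ((-(g j y)⁻¹) - (-(g j x)⁻¹)
            - ((g j x) ^ 2)⁻¹ * ⟪gradient (g j) x, y - x⟫)) :=
      mul_le_mul_of_nonneg_left s4 (Nat.cast_nonneg qq)
    calc ‖∑ j, (((g j y) ^ 2)⁻¹ • gradient (g j) y
          - ((g j x) ^ 2)⁻¹ • gradient (g j) x)‖ ^ 2
        ≤ (∑ j, ‖((g j y) ^ 2)⁻¹ • gradient (g j) y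
          - ((g j x) ^ 2)⁻¹ • gradient (g j) x‖) ^ 2 := s2
      _ ≤ (qq : ℝ) * ∑ j, ‖((g j y) ^ 2)⁻¹ • gradient (g j) y
          - ((g j x) ^ 2)⁻¹ • gradient (g j) x‖ ^ 2 := s3
      _ ≤ (qq : ℝ) * ((8 * β₁ ^ 2 * M ^ 3 + 4 * β * M ^ 2) *
          ∑ j, ((-(g j y)⁻¹) - (-(g j x)⁻¹)
            - ((g j x) ^ 2)⁻¹ * ⟪gradient (g j) x, y - x⟫)) := s5
      _ = ((8 * β₁ ^ 2 * M ^ 3 + 4 * β * M ^ 2) * (qq : ℝ)) *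
          ∑ j, ((-(g j y)⁻¹) - (-(g j x)⁻¹)
            - ((g j x) ^ 2)⁻¹ * ⟪gradient (g j) x, y - x⟫) := by ring
  rcases eq_or_lt_of_le (mul_nonneg hCnn (Nat.cast_nonneg qq) :
      (0:ℝ) ≤ (8 * β₁ ^ 2 * M ^ 3 + 4 * β * M ^ 2) * (qq : ℝ)) with hC0 | hCpos
  · rw [← hC0, div_zero]
    exact hsum_nonneg
  · rw [div_le_iff₀ hCpos]
    calc ‖∑ j, (((g j y) ^ 2)⁻¹ • gradient (g j) y
          - ((g j x) ^ 2)⁻¹ • gradient (g j) x)‖ ^ 2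
        ≤ ((8 * β₁ ^ 2 * M ^ 3 + 4 * β * M ^ 2) * (qq : ℝ)) *
          ∑ j, ((-(g j y)⁻¹) - (-(g j x)⁻¹)
            - ((g j x) ^ 2)⁻¹ * ⟪gradient (g j) x, y - x⟫) := hnum
      _ = (∑ j, ((-(g j y)⁻¹) - (-(g j x)⁻¹)
            - ((g j x) ^ 2)⁻¹ * ⟪gradient (g j) x, y - x⟫)) *
          ((8 * β₁ ^ 2 * M ^ 3 + 4 * β * M ^ 2) * (qq : ℝ)) := by ring
end

section
/- Let F : ℝ^N → ℝ be differentiable and σ-strongly convex for some σ > 0, let W ∈ ℝ^{N×N} be a nonzero symmetric positive semidefinite matrix with smallest nonzero eigenvalue λ_W, and let x, y ∈ ℝ^N satisfy x − y ∈ Range(W). Then F(x) − F(y) ≤ ‖∇F(x)‖_W² / (2σλ_W), where ‖v‖_W := √(vᵀWv). -/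
open RealInnerProductSpace

/-- strongly convex gap bound in the `W`-seminorm.
`F` differentiable and `σ`-strongly convex (`σ > 0`), `W` a nonzero symmetric
PSD matrix with smallest nonzero eigenvalue `λ_W`, and `x − y ∈ Range W`.
Then `F x − F y ≤ ‖∇F x‖_W² / (2 σ λ_W)`, where `‖v‖_W = √(vᵀ W v)`. -/
theorem stmt_18 (N : ℕ) (F : EuclideanSpace ℝ (Fin N) → ℝ)
    (hdiff : Differentiable ℝ F)
    (σ : ℝ) (hσ : 0 < σ)
    (hsc : ∀ z w : EuclideanSpace ℝ (Fin N),
      F w ≥ F z + ⟪gradient F z, w - z⟫ + σ / 2 * ‖w - z‖^2)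
    (W : Matrix (Fin N) (Fin N) ℝ)
    (hsymm : W.IsSymm) (hpsd : W.PosSemidef) (hW0 : W ≠ 0)
    (lamW : ℝ)
    (hlamW : IsLeast {μ : ℝ | μ ≠ 0 ∧
      Module.End.HasEigenvalue (Matrix.toEuclideanLin W) μ} lamW)
    (x y : EuclideanSpace ℝ (Fin N))
    (hxy : x - y ∈ LinearMap.range (Matrix.toEuclideanLin W)) :
    F x - F y ≤
      (Real.sqrt ⟪gradient F x, Matrix.toEuclideanLin W (gradient F x)⟫)^2
        / (2 * σ * lamW) := by
  set g := gradient F x with hg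
  set T := Matrix.toEuclideanLin W with hTdef
  -- positivity of the quadratic form
  have hInnerNonneg : ∀ v : EuclideanSpace ℝ (Fin N), 0 ≤ ⟪v, T v⟫ := by
    intro v
    have := hpsd.dotProduct_mulVec_nonneg (WithLp.equiv 2 _ v)
    simp only [hTdef, Matrix.toEuclideanLin_apply, PiLp.inner_apply, RCLike.inner_apply] at *
    simpa [dotProduct, mul_comm] using this
  have hTsym : T.IsSymmetric := Matrix.isHermitian_iff_isSymmetric.1 hpsd.1
  have hn : Module.finrank ℝ (EuclideanSpace ℝ (Fin N)) = N := finrank_euclideanSpace_fin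
  set b := hTsym.eigenvectorBasis hn with hb
  set μ := hTsym.eigenvalues hn with hμ
  -- eigenvalues are nonnegative
  have hμ0 : ∀ i, 0 ≤ μ i := by
    intro i
    have h1 : T (b i) = μ i • b i := hTsym.apply_eigenvectorBasis hn i
    have h2 := hInnerNonneg (b i)
    rw [h1, real_inner_smul_right, real_inner_self_eq_norm_sq, b.orthonormal.1 i] at h2
    simpa using h2
  -- lamW is positive
  have hlamPos : 0 < lamW := by
    obtain ⟨hne, hev⟩ := hlamW.1
    obtain ⟨v, hv⟩ := hev.exists_hasEigenvector
    have h2 := hInnerNonneg v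
    rw [hv.apply_eq_smul, real_inner_smul_right, real_inner_self_eq_norm_sq] at h2
    have hv0 : 0 < ‖v‖ ^ 2 := pow_pos (norm_pos_iff.mpr hv.2) 2
    have h3 : 0 ≤ lamW := le_of_not_gt fun hc => absurd h2 (by nlinarith)
    exact h3.lt_of_ne (Ne.symm hne)
  have hmuLam : ∀ i, μ i = 0 ∨ lamW ≤ μ i := by
    intro i
    by_cases h : μ i = 0
    · exact Or.inl h
    · exact Or.inr (hlamW.2 ⟨h, hTsym.hasEigenvalue_eigenvalues hn i⟩)
  -- coordinates
  have hreprT : ∀ (v : EuclideanSpace ℝ (Fin N)) (i : Fin N),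
      b.repr (T v) i = μ i * b.repr v i := by
    intro v i
    rw [b.repr_apply_apply, b.repr_apply_apply, ← hTsym (b i) v,
      hTsym.apply_eigenvectorBasis hn i, real_inner_smul_left]
    simp
    rfl
  have hinner : ∀ v w : EuclideanSpace ℝ (Fin N),
      ⟪v, w⟫ = ∑ i, b.repr v i * b.repr w i := by
    intro v w
    calc ⟪v, w⟫ = ⟪b.repr v, b.repr w⟫ := (b.repr.inner_map_map v w).symm
      _ = ∑ i, b.repr v i * b.repr w i := by
          simp only [PiLp.inner_apply, RCLike.inner_apply, starRingEnd_apply, star_trivial]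
          exact Finset.sum_congr rfl fun _ _ => mul_comm _ _
  obtain ⟨u, hu⟩ := hxy
  set G : Fin N → ℝ := fun i => b.repr g i with hG
  set U : Fin N → ℝ := fun i => b.repr u i with hU
  set A := ⟪g, T g⟫ with hA
  have hA0 : 0 ≤ A := hInnerNonneg g
  have hAsum : A = ∑ i, μ i * G i ^ 2 := by
    rw [hA, hinner]
    exact Finset.sum_congr rfl fun i _ => by simp only [hG]; rw [hreprT]; ring
  have hS : ⟪g, x - y⟫ = ∑ i, μ i * (G i * U i) := by
    rw [← hu, hinner]
    exact Finset.sum_congr rfl fun i _ => by simp only [hG, hU]; rw [hreprT]; ring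
  set S := ⟪g, x - y⟫ with hSdef
  set Q := ∑ i, μ i * U i ^ 2 with hQ
  have hdsum : ‖x - y‖ ^ 2 = ∑ i, (μ i * U i) ^ 2 := by
    rw [← real_inner_self_eq_norm_sq, ← hu, hinner]
    exact Finset.sum_congr rfl fun i _ => by simp only [hU]; rw [hreprT]; ring
  -- Cauchy–Schwarz
  have hCS : S ^ 2 ≤ A * Q := by
    have := Finset.sum_mul_sq_le_sq_mul_sq Finset.univ
      (fun i => Real.sqrt (μ i) * G i) (fun i => Real.sqrt (μ i) * U i)
    have e1 : ∀ i : Fin N, (Real.sqrt (μ i) * G i) * (Real.sqrt (μ i) * U i)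
        = μ i * (G i * U i) := by
      intro i
      calc (Real.sqrt (μ i) * G i) * (Real.sqrt (μ i) * U i)
          = (Real.sqrt (μ i) * Real.sqrt (μ i)) * (G i * U i) := by ring
        _ = μ i * (G i * U i) := by rw [Real.mul_self_sqrt (hμ0 i)]
    calc S ^ 2 = (∑ i, (Real.sqrt (μ i) * G i) * (Real.sqrt (μ i) * U i)) ^ 2 := by
          rw [hS]; congr 1; exact Finset.sum_congr rfl fun i _ => (e1 i).symm
      _ ≤ (∑ i, (Real.sqrt (μ i) * G i) ^ 2) * ∑ i, (Real.sqrt (μ i) * U i) ^ 2 := this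
      _ = A * Q := by
          rw [hAsum, hQ]
          congr 1 <;> exact Finset.sum_congr rfl fun i _ => by
            rw [mul_pow, Real.sq_sqrt (hμ0 i)]
  -- eigenvalue lower bound
  have hQd : lamW * Q ≤ ‖x - y‖ ^ 2 := by
    rw [hdsum, hQ, Finset.mul_sum]
    refine Finset.sum_le_sum fun i _ => ?_
    rcases hmuLam i with h | h
    · simp [h]
    · have := sq_nonneg (U i)
      nlinarith [hμ0 i]
  -- strong convexity
  have hmain : F x - F y ≤ S - σ / 2 * ‖x - y‖ ^ 2 := by
    have h := hsc x y
    have e2 : ⟪g, y - x⟫ = -S := by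
      rw [hSdef, show y - x = -(x - y) by abel, inner_neg_right]
    have e3 : ‖y - x‖ = ‖x - y‖ := norm_sub_rev _ _
    rw [e2, e3] at h
    linarith
  -- combine
  have hkey : lamW * S ^ 2 ≤ A * ‖x - y‖ ^ 2 := by
    calc lamW * S ^ 2 ≤ lamW * (A * Q) := by
          exact mul_le_mul_of_nonneg_left hCS hlamPos.le
      _ = A * (lamW * Q) := by ring
      _ ≤ A * ‖x - y‖ ^ 2 := mul_le_mul_of_nonneg_left hQd hA0
  rw [Real.sq_sqrt hA0]
  have ht : 0 ≤ ‖x - y‖ ^ 2 := sq_nonneg _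
  generalize hgen : ‖x - y‖ ^ 2 = t at hmain hkey ht
  clear_value A S
  clear hsc hinner hreprT hAsum hS hQ hCS hQd hdsum hSdef hA hInnerNonneg hu hG hU
  have hfin : S - σ / 2 * t ≤ A / (2 * σ * lamW) := by
    rw [le_div_iff₀ (by positivity)]
    rcases eq_or_lt_of_le hA0 with hA' | hA'
    · have hS2 : S ^ 2 ≤ 0 := by nlinarith
      have hS0 : S = 0 := pow_eq_zero_iff two_ne_zero |>.mp
        (le_antisymm hS2 (sq_nonneg S))
      rw [hS0, ← hA']
      nlinarith [mul_nonneg (mul_nonneg (mul_nonneg hσ.le hσ.le) hlamPos.le) ht]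
    · have hp : 0 ≤ σ ^ 2 * lamW * (A * t - lamW * S ^ 2) :=
        mul_nonneg (by positivity) (by linarith)
      nlinarith [hp, sq_nonneg (A - σ * lamW * S), mul_pos hσ hlamPos]
  linarith
end

section
/- Let F : ℝ^N → ℝ be convex and differentiable, let W ∈ ℝ^{N×N} be a nonzero symmetric positive semidefinite matrix with smallest nonzero eigenvalue λ_W, and let x, y ∈ ℝ^N satisfy x − y ∈ Range(W) and ‖x − y‖ ≤ R. Then F(x) − F(y) ≤ (R/√λ_W) · ‖∇F(x)‖_W, where ‖v‖_W := √(vᵀWv). -/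
open RealInnerProductSpace

/-- convex gap bound in the `W`-seminorm.
`F` convex and differentiable, `W` a nonzero symmetric PSD matrix with smallest
nonzero eigenvalue `λ_W`, `x − y ∈ Range W` and `‖x − y‖ ≤ R`.  Then
`F x − F y ≤ (R / √λ_W) ‖∇F x‖_W`, where `‖v‖_W = √(vᵀ W v)`. -/
theorem stmt_19 (N : ℕ) (F : EuclideanSpace ℝ (Fin N) → ℝ)
    (hconv : ConvexOn ℝ Set.univ F) (hdiff : Differentiable ℝ F)
    (W : Matrix (Fin N) (Fin N) ℝ)
    (hsymm : W.IsSymm) (hpsd : W.PosSemidef) (hW0 : W ≠ 0)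
    (lamW : ℝ)
    (hlamW : IsLeast {μ : ℝ | μ ≠ 0 ∧
      Module.End.HasEigenvalue (Matrix.toEuclideanLin W) μ} lamW)
    (x y : EuclideanSpace ℝ (Fin N)) (R : ℝ)
    (hxy : x - y ∈ LinearMap.range (Matrix.toEuclideanLin W))
    (hR : ‖x - y‖ ≤ R) :
    F x - F y ≤ (R / Real.sqrt lamW) *
      Real.sqrt ⟪gradient F x, Matrix.toEuclideanLin W (gradient F x)⟫ := by
  classical
  set g := gradient F x with hgdef
  have hH : W.IsHermitian := hpsd.1
  set T := Matrix.toEuclideanLin W with hTdef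
  set b := hH.eigenvectorBasis with hbdef
  set μ := hH.eigenvalues with hmudef
  have hμ0 : ∀ i, 0 ≤ μ i := fun i => hpsd.eigenvalues_nonneg i
  have hS : LinearMap.IsSymmetric T := Matrix.isHermitian_iff_isSymmetric.1 hH
  have hTb : ∀ i, T (b i) = μ i • b i := by
    intro i
    apply (WithLp.equiv 2 _).injective
    simpa [hTdef, Matrix.toEuclideanLin_apply] using hH.mulVec_eigenvectorBasis i
  have hinnpos : ∀ v : EuclideanSpace ℝ (Fin N), 0 ≤ ⟪v, T v⟫ := by
    intro v
    have h := hpsd.re_dotProduct_nonneg v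
    simpa [hTdef, Matrix.toEuclideanLin_apply, PiLp.inner_apply, dotProduct,
      mul_comm] using h
  -- `lamW` is positive
  have hlam_pos : 0 < lamW := by
    obtain ⟨hne, heig⟩ := hlamW.1
    obtain ⟨v, hv⟩ := heig.exists_hasEigenvector
    have hv1 : T v = lamW • v := hv.apply_eq_smul
    have h1 : 0 ≤ lamW * ‖v‖ ^ 2 := by
      have h := hinnpos v
      rw [hv1, real_inner_smul_right, real_inner_self_eq_norm_sq] at h
      linarith
    have hv0 : 0 < ‖v‖ ^ 2 := pow_pos (norm_pos_iff.2 hv.2) 2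
    have hge : 0 ≤ lamW := by nlinarith [h1, hv0]
    exact lt_of_le_of_ne hge (Ne.symm hne)
  have hlam_le : ∀ i, μ i ≠ 0 → lamW ≤ μ i := by
    intro i hi
    refine hlamW.2 ⟨hi, ?_⟩
    exact Module.End.hasEigenvalue_of_hasEigenvector
      ⟨Module.End.mem_eigenspace_iff.2 (hTb i), b.orthonormal.ne_zero i⟩
  obtain ⟨u, hu⟩ := hxy
  -- step 1 : convexity gradient inequality
  have step1 : F x - F y ≤ ⟪g, x - y⟫ := by
    set φ : ℝ → ℝ := fun t => F (x + t • (y - x)) with hφ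
    have hline : HasDerivAt (fun t : ℝ => x + t • (y - x)) (y - x) 0 := by
      simpa using ((hasDerivAt_id (0:ℝ)).smul_const (y - x)).const_add x
    have hF : HasFDerivAt F (fderiv ℝ F x) (x + (0:ℝ) • (y - x)) := by
      simpa using (hdiff x).hasFDerivAt
    have hφd : HasDerivAt φ (fderiv ℝ F x (y - x)) 0 := hF.comp_hasDerivAt 0 hline
    have hφc : ConvexOn ℝ Set.univ φ := by
      have h := hconv.comp_affineMap (AffineMap.lineMap x y)
      have heq : φ = F ∘ (AffineMap.lineMap x y) := by
        funext t
        simp only [Function.comp_apply, AffineMap.lineMap_apply_module, φ]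
        congr 1
        module
      rw [heq]
      convert h using 2
      all_goals rfl
    have hs := hφc.le_slope_of_hasDerivAt (Set.mem_univ (0:ℝ)) (Set.mem_univ (1:ℝ))
      one_pos hφd
    have hslope : slope φ 0 1 = F y - F x := by simp [slope, φ]
    have hg : ⟪g, y - x⟫ = fderiv ℝ F x (y - x) := by
      rw [hgdef, gradient]; simp [InnerProductSpace.toDual_apply_apply]
    have h1 : ⟪g, y - x⟫ ≤ F y - F x := by
      rw [hg]; rw [hslope] at hs; exact hs
    have h2 : ⟪g, x - y⟫ = -⟪g, y - x⟫ := by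
      rw [← inner_neg_right]; congr 1; abel
    linarith [h1, h2]
  -- coordinates
  set G : Fin N → ℝ := fun i => ⟪g, b i⟫ with hGdef
  set U : Fin N → ℝ := fun i => ⟪b i, u⟫ with hUdef
  have hDcoord : ∀ (w : EuclideanSpace ℝ (Fin N)) i, ⟪b i, T w⟫ = μ i * ⟪b i, w⟫ := by
    intro w i
    rw [← hS (b i) w, hTb i, real_inner_smul_left]
  have hbd : ∀ i, ⟪b i, x - y⟫ = μ i * U i := by
    intro i; rw [← hu]; exact hDcoord u i
  have hgd : ⟪g, x - y⟫ = ∑ i, G i * (μ i * U i) := by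
    rw [← b.sum_inner_mul_inner g (x - y)]
    exact Finset.sum_congr rfl fun i _ => by rw [hbd i]
  have hgTg : ⟪g, T g⟫ = ∑ i, μ i * G i ^ 2 := by
    rw [← b.sum_inner_mul_inner g (T g)]
    refine Finset.sum_congr rfl fun i _ => ?_
    simp only [hGdef]
    rw [hDcoord g i, real_inner_comm (b i) g]
    ring
  have hd2 : ‖x - y‖ ^ 2 = ∑ i, (μ i * U i) ^ 2 := by
    rw [← real_inner_self_eq_norm_sq, ← b.sum_inner_mul_inner (x - y) (x - y)]
    refine Finset.sum_congr rfl fun i _ => ?_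
    have hbd' : ⟪x - y, b i⟫ = μ i * U i := by rw [real_inner_comm]; exact hbd i
    rw [hbd i, hbd']
    ring
  -- Cauchy-Schwarz
  have hCS : ⟪g, x - y⟫ ≤
      Real.sqrt (∑ i, μ i * G i ^ 2) * Real.sqrt (∑ i, μ i * U i ^ 2) := by
    have h := Real.sum_mul_le_sqrt_mul_sqrt Finset.univ
      (fun i => Real.sqrt (μ i) * G i) (fun i => Real.sqrt (μ i) * U i)
    have h1 : ∀ i : Fin N, (Real.sqrt (μ i) * G i) * (Real.sqrt (μ i) * U i)
        = G i * (μ i * U i) := by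
      intro i
      have hms := Real.mul_self_sqrt (hμ0 i)
      linear_combination G i * U i * hms
    have h2 : ∀ i : Fin N, (Real.sqrt (μ i) * G i) ^ 2 = μ i * G i ^ 2 := by
      intro i; rw [mul_pow, Real.sq_sqrt (hμ0 i)]
    have h3 : ∀ i : Fin N, (Real.sqrt (μ i) * U i) ^ 2 = μ i * U i ^ 2 := by
      intro i; rw [mul_pow, Real.sq_sqrt (hμ0 i)]
    rw [hgd]
    calc ∑ i, G i * (μ i * U i)
        = ∑ i, (Real.sqrt (μ i) * G i) * (Real.sqrt (μ i) * U i) :=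
          (Finset.sum_congr rfl fun i _ => (h1 i).symm)
      _ ≤ Real.sqrt (∑ i, (Real.sqrt (μ i) * G i) ^ 2) *
            Real.sqrt (∑ i, (Real.sqrt (μ i) * U i) ^ 2) := h
      _ = Real.sqrt (∑ i, μ i * G i ^ 2) * Real.sqrt (∑ i, μ i * U i ^ 2) := by
          rw [Finset.sum_congr rfl fun i _ => h2 i, Finset.sum_congr rfl fun i _ => h3 i]
  -- eigenvalue bound
  have hsum_le : lamW * (∑ i, μ i * U i ^ 2) ≤ ‖x - y‖ ^ 2 := by
    rw [hd2, Finset.mul_sum]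
    refine Finset.sum_le_sum fun i _ => ?_
    rcases eq_or_ne (μ i) 0 with h0 | h0
    · simp [h0]
    · have hle := hlam_le i h0
      nlinarith [sq_nonneg (U i), hμ0 i]
  have hS2 : Real.sqrt (∑ i, μ i * U i ^ 2) ≤ R / Real.sqrt lamW := by
    have hS2nn : 0 ≤ ∑ i, μ i * U i ^ 2 :=
      Finset.sum_nonneg fun i _ => mul_nonneg (hμ0 i) (sq_nonneg _)
    have h1 : ∑ i, μ i * U i ^ 2 ≤ ‖x - y‖ ^ 2 / lamW := by
      rw [le_div_iff₀ hlam_pos]; linarith [hsum_le]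
    calc Real.sqrt (∑ i, μ i * U i ^ 2) ≤ Real.sqrt (‖x - y‖ ^ 2 / lamW) :=
          Real.sqrt_le_sqrt h1
      _ = ‖x - y‖ / Real.sqrt lamW := by
          rw [Real.sqrt_div (sq_nonneg _), Real.sqrt_sq (norm_nonneg _)]
      _ ≤ R / Real.sqrt lamW := by
          gcongr
  -- combine
  have hsqrtnn : 0 ≤ Real.sqrt (∑ i, μ i * G i ^ 2) := Real.sqrt_nonneg _
  calc F x - F y ≤ ⟪g, x - y⟫ := step1
    _ ≤ Real.sqrt (∑ i, μ i * G i ^ 2) * Real.sqrt (∑ i, μ i * U i ^ 2) := hCS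
    _ ≤ Real.sqrt (∑ i, μ i * G i ^ 2) * (R / Real.sqrt lamW) := by
          exact mul_le_mul_of_nonneg_left hS2 hsqrtnn
    _ = (R / Real.sqrt lamW) * Real.sqrt ⟪g, T g⟫ := by
          rw [hgTg]; ring
end
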